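/- arXiv:1605.05282 — 5 statements merged into one kernel-verified Lean document; each statement's English description precedes it below -/
import Mathlib

section
/- Let k ≥ 2 and let Z be a random vector in ℝ^k with independent standard normal coordinates Z^{(1)}, ..., Z^{(k)}. Set f_1(x) = x^{(1)} x^{(2)} ... x^{(k)}. Then there exist constants l_k, L_k > 0 depending only on k such that for all real t with |t| ≥ 1, l_k |t|^{-1} ln^{k-2}|t| ≤ |E exp{i t f_1(Z)}| ≤ L_k |t|^{-1} ln^{k-2}(2 + |t|). -/
open MeasureTheory ProbabilityTheory Filter Set

namespace Stmt3Aux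
open Real
open scoped ENNReal NNReal

noncomputable def gphi (x : ℝ) : ℝ := (Real.sqrt (2 * Real.pi))⁻¹ * Real.exp (-x^2/2)

lemma sqrt_two_pi_pos : 0 < Real.sqrt (2 * Real.pi) :=
  Real.sqrt_pos.mpr (by positivity)

lemma gphi_pos (x : ℝ) : 0 < gphi x := by
  unfold gphi; positivity

lemma gphi_cont : Continuous gphi := by
  unfold gphi; fun_prop

lemma gphi_le_half (x : ℝ) : gphi x ≤ 1/2 := by
  unfold gphi
  have h2 : (2:ℝ) ≤ Real.sqrt (2 * Real.pi) := by
    have h4 : (2:ℝ) = Real.sqrt 4 := by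
      rw [show (4:ℝ) = 2^2 by norm_num, Real.sqrt_sq (by norm_num : (0:ℝ) ≤ 2)]
    rw [h4]
    exact Real.sqrt_le_sqrt (by nlinarith [Real.pi_gt_three])
  have h3 : (Real.sqrt (2 * Real.pi))⁻¹ ≤ 1/2 := by
    rw [show (1:ℝ)/2 = 2⁻¹ by norm_num]
    exact inv_anti₀ (by norm_num) h2
  calc (Real.sqrt (2 * Real.pi))⁻¹ * Real.exp (-x^2/2)
      ≤ (1/2) * 1 := by
        apply mul_le_mul h3 (Real.exp_le_one_iff.mpr (by nlinarith [sq_nonneg x]))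
          (Real.exp_pos _).le (by norm_num)
    _ = 1/2 := by ring

lemma gphi_mono {x : ℝ} (h0 : 0 ≤ x) (h1 : x ≤ 1) : gphi 1 ≤ gphi x := by
  unfold gphi
  apply mul_le_mul_of_nonneg_left _ (by positivity)
  apply Real.exp_le_exp.mpr
  nlinarith

lemma gphi_even (x : ℝ) : gphi (-x) = gphi x := by
  unfold gphi; rw [neg_pow]; ring_nf

lemma one_le_log_two_add {t : ℝ} (ht : 1 ≤ t) : 1 ≤ Real.log (2 + t) := by
  rw [Real.le_log_iff_exp_le (by linarith)]
  calc Real.exp 1 ≤ 2.7182818286 := Real.exp_one_lt_d9.le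
    _ ≤ 2 + t := by linarith

lemma integral_log_pow (m : ℕ) {t : ℝ} (ht : 1 ≤ t) :
    ∫ u in (1:ℝ)..t, Real.log u ^ m * u⁻¹ = Real.log t ^ (m+1) / (m+1) := by
  have hderiv : ∀ u ∈ Set.uIcc (1:ℝ) t,
      HasDerivAt (fun v => Real.log v ^ (m+1) / (m+1)) (Real.log u ^ m * u⁻¹) u := by
    intro u hu
    rw [Set.uIcc_of_le ht] at hu
    have hu0 : u ≠ 0 := by have := hu.1; intro h; rw [h] at this; linarith
    have h1 : HasDerivAt (fun v => Real.log v ^ (m+1))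
        ((m+1 : ℕ) * Real.log u ^ m * u⁻¹) u := by
      have := ((Real.hasDerivAt_log hu0).pow (m+1))
      simp at this ⊢
      exact this
    have h2 := h1.div_const (m+1 : ℝ)
    convert h2 using 1
    · rfl
    · rfl
    have : ((m:ℝ)+1) ≠ 0 := by positivity
    rw [eq_div_iff this]; push_cast
    ring
  rw [intervalIntegral.integral_eq_sub_of_hasDerivAt hderiv ?_]
  · simp
  · apply ContinuousOn.intervalIntegrable
    rw [Set.uIcc_of_le ht]
    have hs : ∀ x ∈ Set.Icc (1:ℝ) t, x ≠ 0 := fun x hx => by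
      have := hx.1; intro h; rw [h] at this; linarith
    exact ((Real.continuousOn_log.mono (fun x hx => hs x hx)).pow m).mul
      (ContinuousOn.inv₀ continuousOn_id (fun x hx => hs x hx))

lemma integral_two_mul_Ioi {f : ℝ → ℝ} (hf : Integrable f) (he : ∀ x, f (-x) = f x) :
    ∫ x, f x = 2 * ∫ x in Set.Ioi (0:ℝ), f x := by
  have h1 : ∫ x, f x = (∫ x in Set.Iic (0:ℝ), f x) + ∫ x in Set.Ioi (0:ℝ), f x := by
    rw [← setIntegral_union (Set.Iic_disjoint_Ioi le_rfl) measurableSet_Ioi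
      hf.integrableOn hf.integrableOn, Set.Iic_union_Ioi, setIntegral_univ]
  have h2 : ∫ x in Set.Iic (0:ℝ), f x = ∫ x in Set.Ioi (0:ℝ), f x := by
    calc ∫ x in Set.Iic (0:ℝ), f x = ∫ x in Set.Iic (0:ℝ), f (-x) := by simp_rw [he]
      _ = ∫ x in Set.Ioi (-(0:ℝ)), f x := integral_comp_neg_Iic 0 f
      _ = ∫ x in Set.Ioi (0:ℝ), f x := by rw [neg_zero]
  rw [h1, h2]; ring

lemma integrable_gphi : Integrable gphi := by
  have : Integrable (fun x : ℝ => Real.exp (-(1/2 : ℝ) * x^2)) :=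
    integrable_exp_neg_mul_sq (by norm_num)
  have h2 := this.const_mul (Real.sqrt (2 * Real.pi))⁻¹
  apply h2.congr
  filter_upwards with x
  unfold gphi
  congr 1
  ring_nf

lemma gaussianPDFReal_eq (x : ℝ) : gaussianPDFReal 0 1 x = gphi x := by
  simp [gaussianPDFReal, gphi]

lemma integral_gaussianReal {E : Type*} [NormedAddCommGroup E] [NormedSpace ℝ E] (g : ℝ → E) :
    ∫ x, g x ∂(gaussianReal 0 1) = ∫ x, gphi x • g x := by
  rw [gaussianReal_of_var_ne_zero _ one_ne_zero]
  have : (gaussianPDF 0 1) = fun x => ((gaussianPDFReal 0 1 x).toNNReal : ℝ≥0∞) := rfl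
  rw [this, integral_withDensity_eq_integral_smul]
  · congr 1 with x
    rw [NNReal.smul_def, Real.coe_toNNReal _ (gaussianPDFReal_nonneg 0 1 x), gaussianPDFReal_eq]
  · exact (measurable_gaussianPDFReal 0 1).real_toNNReal

lemma gaussian_laplace (a : ℝ) :
    ∫ x, Real.exp (-(a*x)^2/2) ∂(gaussianReal 0 1) = (Real.sqrt (1+a^2))⁻¹ := by
  rw [integral_gaussianReal]
  have h1 : ∀ x : ℝ, gphi x • Real.exp (-(a*x)^2/2)
      = (Real.sqrt (2 * Real.pi))⁻¹ * Real.exp (-((1+a^2)/2) * x^2) := by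
    intro x
    rw [smul_eq_mul, gphi, mul_assoc, ← Real.exp_add]
    ring_nf
  simp only [h1]
  rw [integral_const_mul, integral_gaussian]
  have ha : (0:ℝ) < 1 + a^2 := by positivity
  have h2 : Real.pi / ((1+a^2)/2) = (2 * Real.pi) / (1 + a^2) := by
    field_simp
  rw [h2, Real.sqrt_div (by positivity : (0:ℝ) ≤ 2 * Real.pi)]
  field_simp

lemma gaussian_char (a : ℝ) :
    ∫ x, Complex.exp (Complex.I * a * x) ∂(gaussianReal 0 1)
      = ((Real.exp (-a^2/2) : ℝ) : ℂ) := by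
  rw [integral_gaussianReal]
  have h1 : ∀ x : ℝ, gphi x • Complex.exp (Complex.I * a * x)
      = ((Real.sqrt (2 * Real.pi))⁻¹ : ℂ) *
        (Complex.exp (Complex.I * a * x) * Complex.exp (-(1/2 : ℂ) * x^2)) := by
    intro x
    rw [gphi, Complex.real_smul]
    push_cast
    rw [mul_assoc, ← Complex.exp_add, ← Complex.exp_add]
    congr 1
    ring
  simp only [h1]
  rw [integral_const_mul, fourierIntegral_gaussian (by norm_num : (0:ℝ) < ((1/2 : ℂ)).re) (a : ℂ)]
  have h2 : ((Real.pi : ℂ)) / (1/2 : ℂ) = ((2 * Real.pi : ℝ) : ℂ) := by push_cast; ring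
  have h3 : ((2 * Real.pi : ℝ) : ℂ) ^ (1/2 : ℂ) = ((Real.sqrt (2*Real.pi) : ℝ) : ℂ) := by
    rw [Real.sqrt_eq_rpow, Complex.ofReal_cpow (by positivity)]
    norm_num
  rw [show (Real.pi : ℂ) / (1/2 : ℂ) = ((2 * Real.pi : ℝ) : ℂ) from h2]
  rw [h3, ← mul_assoc, inv_mul_cancel₀ (Complex.ofReal_ne_zero.mpr (ne_of_gt sqrt_two_pi_pos)),
    one_mul, Complex.ofReal_exp]
  congr 1
  push_cast
  ring

noncomputable def G (m : ℕ) (t : ℝ) : ℝ :=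
  ∫ w : Fin m → ℝ, Real.exp (-(t * ∏ i, w i)^2/2)
    ∂(Measure.pi fun _ : Fin m => gaussianReal 0 1)

lemma contProd {m : ℕ} : Continuous (fun w : Fin m → ℝ => ∏ i, w i) :=
  continuous_finset_prod _ (fun i _ => continuous_apply i)

lemma contGw {m : ℕ} (t : ℝ) :
    Continuous (fun w : Fin m → ℝ => Real.exp (-(t * ∏ i, w i)^2/2)) := by
  fun_prop

lemma norm_exp_le {y : ℝ} (hy : 0 ≤ y) : ‖Real.exp (-y/2)‖ ≤ 1 := by
  rw [Real.norm_eq_abs, abs_of_pos (Real.exp_pos _)]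
  exact Real.exp_le_one_iff.mpr (by linarith)

lemma integrableG {m : ℕ} (t : ℝ) :
    Integrable (fun w : Fin m → ℝ => Real.exp (-(t * ∏ i, w i)^2/2))
      (Measure.pi fun _ : Fin m => gaussianReal 0 1) :=
  (integrable_const 1).mono' (contGw t).aestronglyMeasurable
    (ae_of_all _ fun _ => norm_exp_le (sq_nonneg _))

lemma G_nonneg (m : ℕ) (t : ℝ) : 0 ≤ G m t :=
  integral_nonneg fun w => (Real.exp_pos _).le

lemma G_le_one (m : ℕ) (t : ℝ) : G m t ≤ 1 := by
  have := integral_mono (integrableG (m := m) t) (integrable_const 1)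
    (fun w => Real.exp_le_one_iff.mpr (by nlinarith [sq_nonneg (t * ∏ i, w i)]))
  simpa [G] using this

lemma G_abs (m : ℕ) (t : ℝ) : G m t = G m |t| := by
  unfold G
  congr 1 with w
  rw [mul_pow, mul_pow, sq_abs]

lemma G_neg (m : ℕ) (t : ℝ) : G m (-t) = G m t := by
  rw [G_abs m (-t), abs_neg, ← G_abs]

lemma G_one (t : ℝ) : G 1 t = (Real.sqrt (1+t^2))⁻¹ := by
  unfold G
  rw [← gaussian_laplace t]
  rw [← (MeasureTheory.measurePreserving_funUnique (gaussianReal 0 1) (Fin 1)).integral_comp'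
    (fun x => Real.exp (-(t*x)^2/2))]
  congr 1 with w
  simp [MeasurableEquiv.funUnique, Fin.prod_univ_one]

lemma G_succ (m : ℕ) (t : ℝ) : G (m+1) t = ∫ x, G m (t * x) ∂(gaussianReal 0 1) := by
  have hmp := (measurePreserving_piFinSuccAbove (fun _ : Fin (m+1) => gaussianReal 0 1) 0).symm
  unfold G
  rw [← hmp.integral_comp' (fun w => Real.exp (-(t * ∏ i, w i)^2/2))]
  have hprod : ∀ p : ℝ × (Fin m → ℝ),
      (∏ i, ((MeasurableEquiv.piFinSuccAbove (fun _ : Fin (m+1) => ℝ) 0).symm p) i)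
        = p.1 * ∏ j, p.2 j := by
    intro p
    simp_rw [MeasurableEquiv.piFinSuccAbove_symm_apply, Fin.insertNthEquiv,
      Fin.prod_univ_succ, Fin.insertNth_zero]
    simp [Fin.zero_succAbove]
  simp_rw [hprod]
  have hint : Integrable (fun p : ℝ × (Fin m → ℝ) =>
      Real.exp (-(t * (p.1 * ∏ j, p.2 j))^2/2))
      ((gaussianReal 0 1).prod (Measure.pi fun _ : Fin m => gaussianReal 0 1)) := by
    refine (integrable_const 1).mono' ?_ (ae_of_all _ fun p => norm_exp_le (sq_nonneg _))
    exact (Continuous.aestronglyMeasurable (by fun_prop))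
  rw [integral_prod _ hint]
  congr 1 with x
  congr 1 with w
  congr 2
  ring

lemma main_eq (m : ℕ) (t : ℝ) :
    ∫ z : Fin (m+1) → ℝ, Complex.exp (Complex.I * (t : ℂ) * ((∏ i, z i : ℝ) : ℂ))
      ∂(Measure.pi fun _ : Fin (m+1) => gaussianReal 0 1) = ((G m t : ℝ) : ℂ) := by
  have hmp := (measurePreserving_piFinSuccAbove (fun _ : Fin (m+1) => gaussianReal 0 1) 0).symm
  rw [← hmp.integral_comp'
    (fun z => Complex.exp (Complex.I * (t : ℂ) * ((∏ i, z i : ℝ) : ℂ)))]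
  have hprod : ∀ p : ℝ × (Fin m → ℝ),
      (∏ i, ((MeasurableEquiv.piFinSuccAbove (fun _ : Fin (m+1) => ℝ) 0).symm p) i)
        = p.1 * ∏ j, p.2 j := by
    intro p
    simp_rw [MeasurableEquiv.piFinSuccAbove_symm_apply, Fin.insertNthEquiv,
      Fin.prod_univ_succ, Fin.insertNth_zero]
    simp [Fin.zero_succAbove]
  simp_rw [hprod]
  have hint : Integrable (fun p : ℝ × (Fin m → ℝ) =>
      Complex.exp (Complex.I * (t : ℂ) * ((p.1 * ∏ j, p.2 j : ℝ) : ℂ)))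
      ((gaussianReal 0 1).prod (Measure.pi fun _ : Fin m => gaussianReal 0 1)) := by
    refine (integrable_const 1).mono' (Continuous.aestronglyMeasurable (by fun_prop))
      (ae_of_all _ fun p => ?_)
    rw [Complex.norm_exp]
    have h0 : ∀ r : ℝ, (Complex.I * (t : ℂ) * (r : ℂ)).re = 0 := by
      intro r; simp [Complex.mul_re]
    rw [h0]
    simp
  rw [integral_prod_symm _ hint]
  have hinner : ∀ w : Fin m → ℝ,
      (∫ x : ℝ, Complex.exp (Complex.I * (t : ℂ) * ((x * ∏ j, w j : ℝ) : ℂ))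
        ∂(gaussianReal 0 1)) = ((Real.exp (-(t * ∏ j, w j)^2/2) : ℝ) : ℂ) := by
    intro w
    rw [← gaussian_char (t * ∏ j, w j)]
    congr 1 with x
    push_cast
    ring_nf
  simp_rw [hinner]
  exact integral_ofReal

lemma G_succ' (m : ℕ) (t : ℝ) : G (m+1) t = ∫ x, gphi x * G m (t * x) := by
  rw [G_succ, integral_gaussianReal]
  simp [smul_eq_mul]

lemma G_continuous (n : ℕ) : Continuous (G n) := by
  unfold G
  apply continuous_of_dominated (bound := fun _ => (1:ℝ))
  · exact fun t => (contGw t).aestronglyMeasurable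
  · exact fun t => ae_of_all _ fun w => norm_exp_le (sq_nonneg _)
  · exact integrable_const 1
  · exact ae_of_all _ fun w => by fun_prop

lemma integrable_h (n : ℕ) (t : ℝ) : Integrable (fun x => gphi x * G n (t * x)) := by
  apply integrable_gphi.mono'
  · exact (gphi_cont.mul ((G_continuous n).comp (continuous_const.mul continuous_id))).aestronglyMeasurable
  · refine ae_of_all _ fun x => ?_
    rw [Real.norm_eq_abs, abs_of_nonneg (mul_nonneg (gphi_pos x).le (G_nonneg n _))]
    calc gphi x * G n (t * x) ≤ gphi x * 1 :=
      mul_le_mul_of_nonneg_left (G_le_one n _) (gphi_pos x).le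
    _ = gphi x := mul_one _


lemma lower_integral (m : ℕ) {t : ℝ} (ht : 1 ≤ t) :
    ∫ x in Set.Ioc t⁻¹ 1, Real.log (t*x) ^ m * (t*x)⁻¹
      = t⁻¹ * (Real.log t ^ (m+1) / (m+1)) := by
  have ht0 : 0 < t := by linarith
  have hinv : t⁻¹ ≤ 1 := by
    rw [inv_le_one_iff₀]; right; exact ht
  rw [← intervalIntegral.integral_of_le hinv]
  have hcomp := intervalIntegral.integral_comp_mul_left
    (a := t⁻¹) (b := 1) (f := fun u => Real.log u ^ m * u⁻¹) (ne_of_gt ht0)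
  rw [hcomp, mul_inv_cancel₀ (ne_of_gt ht0), mul_one, integral_log_pow m ht, smul_eq_mul]

lemma integral_inv_Ioc {t : ℝ} (ht : 1 ≤ t) :
    ∫ x in Set.Ioc t⁻¹ 1, x⁻¹ = Real.log t := by
  have ht0 : 0 < t := by linarith
  have hinv : t⁻¹ ≤ 1 := by rw [inv_le_one_iff₀]; right; exact ht
  have h0 : (0:ℝ) ∉ Set.uIcc t⁻¹ 1 := by
    rw [Set.uIcc_of_le hinv]
    intro hmem
    linarith [hmem.1, inv_pos.mpr ht0]
  rw [← intervalIntegral.integral_of_le hinv, integral_inv h0, one_div, inv_inv]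

lemma integrableOn_inv_Ioc {t : ℝ} (ht : 1 ≤ t) :
    IntegrableOn (fun x : ℝ => x⁻¹) (Set.Ioc t⁻¹ 1) := by
  have ht0 : 0 < t := by linarith
  have hinvpos : 0 < t⁻¹ := inv_pos.mpr ht0
  apply (ContinuousOn.integrableOn_Icc ?_).mono_set Set.Ioc_subset_Icc_self
  apply ContinuousOn.inv₀ continuousOn_id
  intro x hx h
  have hx0 : x = 0 := h
  rw [hx0] at hx
  linarith [hx.1, inv_pos.mpr ht0]

lemma integrableOn_logpow_Ioc (m : ℕ) {t : ℝ} (ht : 1 ≤ t) :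
    IntegrableOn (fun x : ℝ => Real.log (t*x) ^ m * (t*x)⁻¹) (Set.Ioc t⁻¹ 1) := by
  have ht0 : 0 < t := by linarith
  have hinvpos : 0 < t⁻¹ := inv_pos.mpr ht0
  apply (ContinuousOn.integrableOn_Icc ?_).mono_set Set.Ioc_subset_Icc_self
  have hne : ∀ x ∈ Set.Icc t⁻¹ 1, t * x ≠ 0 := by
    intro x hx
    have hx0 : 0 < x := lt_of_lt_of_le hinvpos hx.1
    positivity
  exact ((ContinuousOn.log (by fun_prop) hne).pow m).mul
    (ContinuousOn.inv₀ (by fun_prop) hne)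

lemma integrableOn_A (m : ℕ) :
    IntegrableOn (fun x : ℝ => gphi x * (2+x)^m) (Set.Ioi 1) := by
  have hbase : IntegrableOn (fun x : ℝ => x ^ (m:ℝ) * Real.exp (-(1/2:ℝ) * x^2))
      (Set.Ioi 0) := integrableOn_rpow_mul_exp_neg_mul_sq (by norm_num)
      (by exact_mod_cast lt_of_lt_of_le (by norm_num : (-1:ℝ) < 0) (Nat.cast_nonneg m))
  have hbase2 := (hbase.mono_set (Set.Ioi_subset_Ioi zero_le_one)).const_mul
    ((Real.sqrt (2*Real.pi))⁻¹ * 3^m)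
  apply hbase2.mono'
  · exact ((gphi_cont.mul (by fun_prop)).aestronglyMeasurable).restrict
  · filter_upwards [ae_restrict_mem measurableSet_Ioi] with x hx
    have hx1 : (1:ℝ) ≤ x := le_of_lt hx
    have hx0 : (0:ℝ) < x := by linarith
    rw [Real.norm_eq_abs, abs_of_nonneg (mul_nonneg (gphi_pos x).le (by positivity))]
    unfold gphi
    have hxp : x^(m:ℝ) = x^m := Real.rpow_natCast x m
    have hexp : Real.exp (-(1/2:ℝ)*x^2) = Real.exp (-x^2/2) := by ring_nf
    rw [hxp, hexp]
    calc (Real.sqrt (2*Real.pi))⁻¹ * Real.exp (-x^2/2) * (2+x)^m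
        ≤ (Real.sqrt (2*Real.pi))⁻¹ * Real.exp (-x^2/2) * (3^m * x^m) := by
          have h3 : (2+x)^m ≤ (3*x)^m :=
            pow_le_pow_left₀ (by linarith) (by linarith) m
          rw [mul_pow] at h3
          have hc : (0:ℝ) < (Real.sqrt (2*Real.pi))⁻¹ * Real.exp (-x^2/2) := by positivity
          exact mul_le_mul_of_nonneg_left h3 hc.le
      _ = (Real.sqrt (2*Real.pi))⁻¹ * 3^m * (x^m * Real.exp (-x^2/2)) := by ring


set_option maxHeartbeats 1000000 in
theorem Gbound (m : ℕ) : ∃ c C : ℝ, 0 < c ∧ 0 < C ∧ ∀ t : ℝ, 1 ≤ t →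
    c * t⁻¹ * Real.log t ^ m ≤ G (m+1) t ∧
    G (m+1) t ≤ C * t⁻¹ * Real.log (2+t) ^ m := by
  induction m with
  | zero =>
    refine ⟨1/2, 1, by norm_num, by norm_num, fun t ht => ?_⟩
    have ht0 : (0:ℝ) < t := by linarith
    rw [pow_zero, pow_zero, mul_one, mul_one, G_one]
    have hsq : (0:ℝ) < Real.sqrt (1+t^2) := Real.sqrt_pos.mpr (by positivity)
    constructor
    · have h1 : Real.sqrt (1+t^2) ≤ 2*t := by
        have : Real.sqrt (1+t^2) ≤ Real.sqrt ((2*t)^2) :=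
          Real.sqrt_le_sqrt (by nlinarith)
        rwa [Real.sqrt_sq (by linarith : (0:ℝ) ≤ 2*t)] at this
      calc (1:ℝ)/2 * t⁻¹ = (2*t)⁻¹ := by rw [mul_inv]; ring
        _ ≤ (Real.sqrt (1+t^2))⁻¹ := inv_anti₀ hsq h1
    · have h1 : t ≤ Real.sqrt (1+t^2) := by
        have : Real.sqrt (t^2) ≤ Real.sqrt (1+t^2) := Real.sqrt_le_sqrt (by nlinarith)
        rwa [Real.sqrt_sq ht0.le] at this
      calc (Real.sqrt (1+t^2))⁻¹ ≤ t⁻¹ := inv_anti₀ ht0 h1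
        _ = 1 * t⁻¹ := by ring
  | succ m ih =>
    obtain ⟨c, C, hc, hC, hI⟩ := ih
    set A : ℝ := ∫ x in Set.Ioi (1:ℝ), gphi x * (2+x)^m with hA
    have hA0 : 0 ≤ A := setIntegral_nonneg measurableSet_Ioi
      (fun x hx => mul_nonneg (gphi_pos x).le (pow_nonneg (by have := Set.mem_Ioi.mp hx; linarith) m))
    refine ⟨gphi 1 * c / (m+2), 1 + C + 2*C*A,
      div_pos (mul_pos (gphi_pos 1) hc) (by exact_mod_cast Nat.cast_pos.mpr (Nat.succ_pos _) : (0:ℝ) < (m:ℝ)+2),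
      by nlinarith [mul_nonneg hC.le hA0], fun t ht => ?_⟩
    have ht0 : (0:ℝ) < t := by linarith
    have hinv1 : t⁻¹ ≤ 1 := by rw [inv_le_one_iff₀]; right; exact ht
    have hinv0 : 0 < t⁻¹ := inv_pos.mpr ht0
    have heq : G (m+2) t = ∫ x, gphi x * G (m+1) (t * x) := G_succ' (m+1) t
    have hIoc : MeasurableSet (Set.Ioc t⁻¹ (1:ℝ)) := measurableSet_Ioc
    have hhnn : ∀ x : ℝ, 0 ≤ gphi x * G (m+1) (t * x) :=
      fun x => mul_nonneg (gphi_pos x).le (G_nonneg _ _)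
    constructor
    · -- LOWER BOUND
      have hstep1 : ∫ x in Set.Ioc t⁻¹ 1, gphi x * G (m+1) (t*x) ≤ G (m+2) t := by
        rw [heq]
        exact setIntegral_le_integral (integrable_h _ t) (ae_of_all _ hhnn)
      have hstep2 : ∫ x in Set.Ioc t⁻¹ 1, (gphi 1 * c) * (Real.log (t*x) ^ m * (t*x)⁻¹)
          ≤ ∫ x in Set.Ioc t⁻¹ 1, gphi x * G (m+1) (t*x) := by
        apply setIntegral_mono_on
          (((integrableOn_logpow_Ioc m ht).const_mul _))
          ((integrable_h (m+1) t).integrableOn) hIoc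
        intro x hx
        have hx1 : t⁻¹ < x := hx.1
        have hx2 : x ≤ 1 := hx.2
        have htx : 1 ≤ t * x := by
          have : t * t⁻¹ ≤ t * x := mul_le_mul_of_nonneg_left hx1.le ht0.le
          rwa [mul_inv_cancel₀ (ne_of_gt ht0)] at this
        have hIH := (hI (t*x) htx).1
        calc (gphi 1 * c) * (Real.log (t*x) ^ m * (t*x)⁻¹)
            = gphi 1 * (c * (t*x)⁻¹ * Real.log (t*x) ^ m) := by ring
          _ ≤ gphi x * G (m+1) (t*x) := by
              apply mul_le_mul (gphi_mono (by linarith) hx2) hIH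
                (mul_nonneg (mul_nonneg hc.le (by positivity))
                  (pow_nonneg (Real.log_nonneg htx) m)) (gphi_pos x).le
      have hval : ∫ x in Set.Ioc t⁻¹ 1, (gphi 1 * c) * (Real.log (t*x) ^ m * (t*x)⁻¹)
          = (gphi 1 * c) * (t⁻¹ * (Real.log t ^ (m+1) / (m+1))) := by
        rw [integral_const_mul, lower_integral m ht]
      have hlog : 0 ≤ Real.log t := Real.log_nonneg ht
      have hm1 : (0:ℝ) < (m:ℝ)+1 := by positivity
      have h12 : ((m:ℝ)+2)⁻¹ ≤ ((m:ℝ)+1)⁻¹ := inv_anti₀ hm1 (by linarith)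
      have hGnn : 0 ≤ gphi 1 * c * t⁻¹ * Real.log t ^ (m+1) :=
        mul_nonneg (mul_nonneg (mul_nonneg (gphi_pos 1).le hc.le) hinv0.le)
          (pow_nonneg hlog _)
      have hfin : gphi 1 * c / ((m:ℝ)+2) * t⁻¹ * Real.log t ^ (m+1)
          ≤ (gphi 1 * c) * (t⁻¹ * (Real.log t ^ (m+1) / ((m:ℝ)+1))) := by
        calc gphi 1 * c / ((m:ℝ)+2) * t⁻¹ * Real.log t ^ (m+1)
            = (gphi 1 * c * t⁻¹ * Real.log t ^ (m+1)) * ((m:ℝ)+2)⁻¹ := by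
              rw [div_eq_mul_inv]; ring
          _ ≤ (gphi 1 * c * t⁻¹ * Real.log t ^ (m+1)) * ((m:ℝ)+1)⁻¹ :=
              mul_le_mul_of_nonneg_left h12 hGnn
          _ = (gphi 1 * c) * (t⁻¹ * (Real.log t ^ (m+1) / ((m:ℝ)+1))) := by
              rw [div_eq_mul_inv]; ring
      push_cast at hval hfin ⊢
      linarith [hstep1, hstep2, hval.ge, hval.le]
    · -- UPPER BOUND
      set h : ℝ → ℝ := fun x => gphi x * G (m+1) (t*x) with hh
      have hhe : ∀ x, h (-x) = h x := by
        intro x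
        simp only [hh]
        rw [gphi_even, mul_neg, G_neg]
      have h2 : G (m+2) t = 2 * ∫ x in Set.Ioi (0:ℝ), h x := by
        rw [heq]; exact integral_two_mul_Ioi (integrable_h _ t) hhe
      have hint : Integrable h := integrable_h (m+1) t
      have hIsum : ∫ x in Set.Ioi (0:ℝ), h x =
          (∫ x in Set.Ioc (0:ℝ) t⁻¹, h x) + (∫ x in Set.Ioc t⁻¹ 1, h x)
           + ∫ x in Set.Ioi (1:ℝ), h x := by
        rw [← Set.Ioc_union_Ioi_eq_Ioi (zero_le_one (α := ℝ)),
          setIntegral_union (Set.Ioc_disjoint_Ioi le_rfl) measurableSet_Ioi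
            hint.integrableOn hint.integrableOn,
          ← Set.Ioc_union_Ioc_eq_Ioc hinv0.le hinv1,
          setIntegral_union (Set.Ioc_disjoint_Ioc_of_le le_rfl) measurableSet_Ioc
            hint.integrableOn hint.integrableOn]
      have hlog2t : (0:ℝ) ≤ Real.log (2+t) := Real.log_nonneg (by linarith)
      have hT1 : ∫ x in Set.Ioc (0:ℝ) t⁻¹, h x ≤ (1/2) * t⁻¹ := by
        have hmon : ∫ x in Set.Ioc (0:ℝ) t⁻¹, h x ≤ ∫ _x in Set.Ioc (0:ℝ) t⁻¹, (1/2 : ℝ) := by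
          apply setIntegral_mono_on hint.integrableOn
            (integrableOn_const measure_Ioc_lt_top.ne) measurableSet_Ioc
          intro x _hx
          calc h x ≤ gphi x * 1 := mul_le_mul_of_nonneg_left (G_le_one _ _) (gphi_pos x).le
            _ = gphi x := mul_one _
            _ ≤ 1/2 := gphi_le_half x
        rw [setIntegral_const, measureReal_def, Real.volume_Ioc, smul_eq_mul,
          ENNReal.toReal_ofReal (by linarith)] at hmon
        linarith
      have hT2 : ∫ x in Set.Ioc t⁻¹ 1, h x
          ≤ (1/2) * C * t⁻¹ * Real.log (2+t)^m * Real.log t := by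
        have hmono : ∫ x in Set.Ioc t⁻¹ 1, h x
            ≤ ∫ x in Set.Ioc t⁻¹ 1, ((1/2) * C * t⁻¹ * Real.log (2+t)^m) * x⁻¹ := by
          apply setIntegral_mono_on hint.integrableOn
            ((integrableOn_inv_Ioc ht).const_mul _) hIoc
          intro x hx
          have hx1 : t⁻¹ < x := hx.1
          have hx2 : x ≤ 1 := hx.2
          have hx0 : 0 < x := lt_trans hinv0 hx1
          have htx : 1 ≤ t*x := by
            have h5 : t * t⁻¹ ≤ t * x := mul_le_mul_of_nonneg_left hx1.le ht0.le
            rwa [mul_inv_cancel₀ (ne_of_gt ht0)] at h5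
          have hIH := (hI (t*x) htx).2
          have hlogmono : Real.log (2+t*x) ^ m ≤ Real.log (2+t) ^ m := by
            apply pow_le_pow_left₀ (Real.log_nonneg (by linarith))
            apply Real.log_le_log (by linarith)
            have h6 : t*x ≤ t*1 := mul_le_mul_of_nonneg_left hx2 ht0.le
            linarith
          calc h x ≤ (1/2) * G (m+1) (t*x) :=
                mul_le_mul_of_nonneg_right (gphi_le_half x) (G_nonneg _ _)
            _ ≤ (1/2) * (C * (t*x)⁻¹ * Real.log (2+t*x)^m) :=
                mul_le_mul_of_nonneg_left hIH (by norm_num)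
            _ ≤ ((1/2) * C * t⁻¹ * Real.log (2+t)^m) * x⁻¹ := by
                rw [mul_inv]
                calc (1/2) * (C * (t⁻¹*x⁻¹) * Real.log (2+t*x)^m)
                    ≤ (1/2) * (C * (t⁻¹*x⁻¹) * Real.log (2+t)^m) := by
                      apply mul_le_mul_of_nonneg_left
                        (mul_le_mul_of_nonneg_left hlogmono (by positivity)) (by norm_num)
                  _ = ((1/2)*C*t⁻¹*Real.log (2+t)^m) * x⁻¹ := by ring
        rw [integral_const_mul, integral_inv_Ioc ht] at hmono
        exact hmono
      have hT3 : ∫ x in Set.Ioi (1:ℝ), h x ≤ C * t⁻¹ * Real.log (2+t)^m * A := by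
        have hmono : ∫ x in Set.Ioi (1:ℝ), h x
            ≤ ∫ x in Set.Ioi (1:ℝ), (C * t⁻¹ * Real.log (2+t)^m) * (gphi x * (2+x)^m) := by
          apply setIntegral_mono_on hint.integrableOn
            ((integrableOn_A m).const_mul _) measurableSet_Ioi
          intro x hx
          simp only [hh]
          have hx1 : (1:ℝ) < x := hx
          have hx0 : (0:ℝ) < x := by linarith
          have htx : 1 ≤ t*x := by nlinarith
          have hIH := (hI (t*x) htx).2
          have hlog1 : Real.log (2+t*x) ≤ Real.log (2+t) * (2+x) := by
            have e1 : Real.log (2+t*x) ≤ Real.log ((2+t)*(2+x)) :=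
              Real.log_le_log (by nlinarith) (by nlinarith)
            have e2 : Real.log ((2+t)*(2+x)) = Real.log (2+t) + Real.log (2+x) :=
              Real.log_mul (by nlinarith) (by nlinarith)
            have e3 : Real.log (2+x) ≤ 1 + x := by
              have := Real.log_le_sub_one_of_pos (show (0:ℝ) < 2+x by linarith)
              linarith
            have e4 : 1 ≤ Real.log (2+t) := one_le_log_two_add ht
            nlinarith
          have hlogpow : Real.log (2+t*x)^m ≤ Real.log (2+t)^m * (2+x)^m := by
            rw [← mul_pow]
            exact pow_le_pow_left₀ (Real.log_nonneg (by nlinarith)) hlog1 m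
          have hxinv : (t*x)⁻¹ ≤ t⁻¹ := by
            rw [mul_inv]
            calc t⁻¹ * x⁻¹ ≤ t⁻¹ * 1 := by
                  apply mul_le_mul_of_nonneg_left _ hinv0.le
                  rw [inv_le_one_iff₀]; right; exact hx1.le
              _ = t⁻¹ := mul_one _
          calc gphi x * G (m+1) (t*x)
              ≤ gphi x * (C * (t*x)⁻¹ * Real.log (2+t*x)^m) :=
                mul_le_mul_of_nonneg_left hIH (gphi_pos x).le
            _ ≤ gphi x * (C * t⁻¹ * (Real.log (2+t)^m * (2+x)^m)) := by
                apply mul_le_mul_of_nonneg_left _ (gphi_pos x).le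
                apply mul_le_mul (mul_le_mul_of_nonneg_left hxinv hC.le) hlogpow
                  (pow_nonneg (Real.log_nonneg (by nlinarith)) m) (by positivity)
            _ = (C * t⁻¹ * Real.log (2+t)^m) * (gphi x * (2+x)^m) := by ring
        rw [integral_const_mul] at hmono
        exact hmono
      have hone : (1:ℝ) ≤ Real.log (2+t) := one_le_log_two_add ht
      have hlpow : (1:ℝ) ≤ Real.log (2+t)^(m+1) := one_le_pow₀ hone
      have hlogt : Real.log t ≤ Real.log (2+t) := Real.log_le_log ht0 (by linarith)
      have hb1 : (1/2) * t⁻¹ ≤ (1/2) * t⁻¹ * Real.log (2+t)^(m+1) :=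
        le_mul_of_one_le_right (by positivity) hlpow
      have hb2 : (1/2)*C*t⁻¹*Real.log (2+t)^m*Real.log t
          ≤ (1/2)*C*t⁻¹*Real.log (2+t)^(m+1) := by
        have e : Real.log (2+t)^m * Real.log t ≤ Real.log (2+t)^(m+1) := by
          rw [pow_succ]
          exact mul_le_mul_of_nonneg_left hlogt (pow_nonneg hlog2t m)
        calc (1/2)*C*t⁻¹*Real.log (2+t)^m*Real.log t
            = (1/2)*C*t⁻¹*(Real.log (2+t)^m*Real.log t) := by ring
          _ ≤ (1/2)*C*t⁻¹*Real.log (2+t)^(m+1) :=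
              mul_le_mul_of_nonneg_left e (by positivity)
      have hb3 : C*t⁻¹*Real.log (2+t)^m*A ≤ C*t⁻¹*Real.log (2+t)^(m+1)*A := by
        apply mul_le_mul_of_nonneg_right _ hA0
        exact mul_le_mul_of_nonneg_left (pow_le_pow_right₀ hone (Nat.le_succ m)) (by positivity)
      rw [h2, hIsum]
      calc 2 * ((∫ x in Set.Ioc (0:ℝ) t⁻¹, h x) + (∫ x in Set.Ioc t⁻¹ 1, h x)
            + ∫ x in Set.Ioi (1:ℝ), h x)
          ≤ 2 * (((1/2) * t⁻¹ * Real.log (2+t)^(m+1))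
            + ((1/2)*C*t⁻¹*Real.log (2+t)^(m+1))
            + (C*t⁻¹*Real.log (2+t)^(m+1)*A)) := by
            linarith [hT1.trans hb1, hT2.trans hb2, hT3.trans hb3]
        _ = (1 + C + 2*C*A) * t⁻¹ * Real.log (2+t)^(m+1) := by ring


end Stmt3Aux

/-- (Theorem 4.) Let `Z` be a standard Gaussian random vector in `ℝᵏ`, `k ≥ 2`,
and `f₁(x) = x⁽¹⁾ ⋯ x⁽ᵏ⁾`. Then there are constants `l_k, L_k > 0` depending only on `k` such
that for all `|t| ≥ 1`,
`l_k |t|⁻¹ lnᵏ⁻²|t| ≤ |E exp(i t f₁(Z))| ≤ L_k |t|⁻¹ lnᵏ⁻²(2 + |t|)`. -/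
theorem stmt_3 (k : ℕ) (hk : 2 ≤ k) :
    ∃ l L : ℝ, 0 < l ∧ 0 < L ∧
      ∀ t : ℝ, 1 ≤ |t| →
        l * |t|⁻¹ * Real.log |t| ^ (k - 2) ≤
            ‖∫ z : Fin k → ℝ, Complex.exp (Complex.I * (t : ℂ) * ((∏ i, z i : ℝ) : ℂ))
              ∂(Measure.pi fun _ : Fin k => gaussianReal 0 1)‖ ∧
          ‖∫ z : Fin k → ℝ, Complex.exp (Complex.I * (t : ℂ) * ((∏ i, z i : ℝ) : ℂ))
              ∂(Measure.pi fun _ : Fin k => gaussianReal 0 1)‖ ≤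
            L * |t|⁻¹ * Real.log (2 + |t|) ^ (k - 2) := by
  obtain ⟨m, rfl⟩ : ∃ m, k = m + 2 := ⟨k - 2, by omega⟩
  obtain ⟨c, C, hc, hC, hI⟩ := Stmt3Aux.Gbound m
  refine ⟨c, C, hc, hC, fun t ht => ?_⟩
  have h2 : ∫ z : Fin (m+2) → ℝ, Complex.exp (Complex.I * (t : ℂ) * ((∏ i, z i : ℝ) : ℂ))
      ∂(Measure.pi fun _ : Fin (m+2) => gaussianReal 0 1)
      = ((Stmt3Aux.G (m+1) t : ℝ) : ℂ) := Stmt3Aux.main_eq (m+1) t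
  have hnorm : ‖∫ z : Fin (m+2) → ℝ, Complex.exp (Complex.I * (t : ℂ) * ((∏ i, z i : ℝ) : ℂ))
      ∂(Measure.pi fun _ : Fin (m+2) => gaussianReal 0 1)‖ = Stmt3Aux.G (m+1) |t| := by
    rw [h2, Complex.norm_real, Real.norm_eq_abs,
      abs_of_nonneg (Stmt3Aux.G_nonneg (m+1) t), Stmt3Aux.G_abs]
  have h := hI |t| ht
  simp only [Nat.add_sub_cancel]
  rw [hnorm]
  exact h
end

section
/- Let X be a real random variable with |X| ≤ 1 and characteristic function g_X, with φ_X(T) = ∫_{-T}^{T} |g_X(t)| dt. Suppose there exist a nondecreasing positive function φ(t) on (0,∞) and a constant ε with 0 ≤ ε < 1 such that φ_X(bt) ≤ b^ε φ(t) for all t ≥ 1 and b ≥ 1. Then the distribution function of X is a Lipschitz function of order 1 - ε, i.e., there exists a constant C such that |F_X(x) - F_X(y)| ≤ C |x - y|^{1-ε} for all real x, y. -/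
open MeasureTheory ProbabilityTheory Filter Set

lemma cos_lb {u : ℝ} (hu : |u| ≤ 1) : u ^ 2 / 3 ≤ 1 - Real.cos u := by
  have h := Real.cos_bound hu
  rw [abs_le] at h
  have h4 : |u| ^ 4 ≤ |u| ^ 2 := pow_le_pow_of_le_one (abs_nonneg u) hu (by norm_num)
  have h2 : |u| ^ 2 = u ^ 2 := sq_abs u
  nlinarith [h.1, h.2]

lemma one_sub_cos_le {u : ℝ} : 1 - Real.cos u ≤ u ^ 2 / 2 := by
  have h1 : Real.cos u = 1 - 2 * Real.sin (u / 2) ^ 2 := by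
    have := Real.cos_sq (u / 2)
    have h2 : Real.sin (u/2) ^ 2 = 1 - Real.cos (u/2) ^ 2 := by
      nlinarith [Real.sin_sq_add_cos_sq (u/2)]
    rw [h2]
    rw [this]
    ring_nf
  have hs : |Real.sin (u/2)| ≤ |u/2| := Real.abs_sin_le_abs
  have hss : Real.sin (u/2) ^ 2 ≤ (u/2) ^ 2 := by
    have := pow_le_pow_left₀ (abs_nonneg _) hs 2
    simpa [sq_abs] using this
  nlinarith [hss]

lemma kernel_half {T x : ℝ} (hT : 0 < T) (hx : x ≠ 0) :
    ∫ t in (0:ℝ)..T, (1 - t / T) * Real.cos (t * x)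
      = (1 - Real.cos (T * x)) / (T * x ^ 2) := by
  have hderiv : ∀ t ∈ Set.uIcc (0:ℝ) T,
      HasDerivAt (fun t => (1 - t / T) * (Real.sin (t * x) / x)
        - Real.cos (t * x) / (T * x ^ 2)) ((1 - t / T) * Real.cos (t * x)) t := by
    intro t _
    have h1 : HasDerivAt (fun t : ℝ => t * x) x t := hasDerivAt_mul_const x
    have hs : HasDerivAt (fun t : ℝ => Real.sin (t * x)) (Real.cos (t*x) * x) t :=
      by have := (Real.hasDerivAt_sin (t*x)).comp t h1; exact this
    have hc : HasDerivAt (fun t : ℝ => Real.cos (t * x)) (-Real.sin (t*x) * x) t :=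
      by have := (Real.hasDerivAt_cos (t*x)).comp t h1; exact this
    have hlin : HasDerivAt (fun t : ℝ => 1 - t / T) (-(1/T)) t := by
      simpa using ((hasDerivAt_id t).div_const T).const_sub 1
    have := (hlin.mul (hs.div_const x)).sub (hc.div_const (T * x ^ 2))
    refine this.congr_deriv ?_
    field_simp [hT.ne']
    ring
  rw [intervalIntegral.integral_eq_sub_of_hasDerivAt hderiv
    ((Continuous.mul (by continuity) (by continuity)).intervalIntegrable _ _)]
  rw [div_self hT.ne']
  simp only [zero_div, zero_mul, Real.sin_zero, Real.cos_zero, one_div]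
  field_simp
  ring

lemma kernel_eq {T x : ℝ} (hT : 0 < T) (hx : x ≠ 0) :
    ∫ t in (-T)..T, (1 - |t| / T) * Real.cos (t * x)
      = 2 * ((1 - Real.cos (T * x)) / (T * x ^ 2)) := by
  have hcont : ∀ a b : ℝ, IntervalIntegrable (fun t => (1 - |t| / T) * Real.cos (t * x))
      volume a b := fun a b => (Continuous.mul (by continuity) (by continuity)).intervalIntegrable _ _
  have hsplit := intervalIntegral.integral_add_adjacent_intervals (a := -T) (b := 0) (c := T)
    (hcont _ _) (hcont _ _)
  have hpos : ∫ t in (0:ℝ)..T, (1 - |t| / T) * Real.cos (t * x)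
      = (1 - Real.cos (T * x)) / (T * x ^ 2) := by
    rw [show (∫ t in (0:ℝ)..T, (1 - |t| / T) * Real.cos (t * x))
        = ∫ t in (0:ℝ)..T, (1 - t / T) * Real.cos (t * x) from
      intervalIntegral.integral_congr (fun t ht => by
        rw [Set.uIcc_of_le hT.le] at ht
        rw [abs_of_nonneg ht.1])]
    exact kernel_half hT hx
  have hneg : ∫ t in (-T)..(0:ℝ), (1 - |t| / T) * Real.cos (t * x)
      = (1 - Real.cos (T * x)) / (T * x ^ 2) := by
    have := intervalIntegral.integral_comp_neg (a := (0:ℝ)) (b := T)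
      (fun t => (1 - |t| / T) * Real.cos (t * x))
    simp only [neg_zero] at this
    rw [← this]
    rw [show (∫ t in (0:ℝ)..T, (1 - |(-t)| / T) * Real.cos (-t * x))
        = ∫ t in (0:ℝ)..T, (1 - t / T) * Real.cos (t * x) from
      intervalIntegral.integral_congr (fun t ht => by
        rw [Set.uIcc_of_le hT.le] at ht
        rw [abs_neg, abs_of_nonneg ht.1, neg_mul, Real.cos_neg])]
    exact kernel_half hT hx
  rw [← hsplit, hpos, hneg]; ring

lemma kernel_zero_half {T : ℝ} (hT : 0 < T) :
    ∫ t in (0:ℝ)..T, (1 - t / T) = T / 2 := by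
  have hderiv : ∀ t ∈ Set.uIcc (0:ℝ) T,
      HasDerivAt (fun t : ℝ => t - t ^ 2 / (2 * T)) (1 - t / T) t := by
    intro t _
    have := (hasDerivAt_id t).sub (((hasDerivAt_pow 2 t)).div_const (2 * T))
    refine this.congr_deriv ?_
    field_simp [hT.ne']
    ring
  rw [intervalIntegral.integral_eq_sub_of_hasDerivAt hderiv
    ((Continuous.sub continuous_const (by continuity)).intervalIntegrable _ _)]
  · field_simp
    ring

lemma kernel_zero {T : ℝ} (hT : 0 < T) :
    ∫ t in (-T)..T, (1 - |t| / T) * Real.cos (t * 0) = T := by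
  simp only [mul_zero, Real.cos_zero, mul_one]
  have hcont : ∀ a b : ℝ, IntervalIntegrable (fun t : ℝ => 1 - |t| / T) volume a b :=
    fun a b => (Continuous.sub continuous_const (by continuity)).intervalIntegrable _ _
  have hsplit := intervalIntegral.integral_add_adjacent_intervals (a := -T) (b := 0) (c := T)
    (hcont _ _) (hcont _ _)
  have hpos : ∫ t in (0:ℝ)..T, (1 - |t| / T) = T / 2 := by
    rw [show (∫ t in (0:ℝ)..T, (1 - |t| / T)) = ∫ t in (0:ℝ)..T, (1 - t / T) from
      intervalIntegral.integral_congr (fun t ht => by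
        rw [Set.uIcc_of_le hT.le] at ht
        rw [abs_of_nonneg ht.1])]
    exact kernel_zero_half hT
  have hneg : ∫ t in (-T)..(0:ℝ), (1 - |t| / T) = T / 2 := by
    have := intervalIntegral.integral_comp_neg (a := (0:ℝ)) (b := T)
      (fun t : ℝ => 1 - |t| / T)
    simp only [neg_zero] at this
    rw [← this]
    rw [show (∫ t in (0:ℝ)..T, (1 - |(-t)| / T)) = ∫ t in (0:ℝ)..T, (1 - t / T) from
      intervalIntegral.integral_congr (fun t ht => by
        rw [Set.uIcc_of_le hT.le] at ht
        rw [abs_neg, abs_of_nonneg ht.1])]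
    exact kernel_zero_half hT
  rw [← hsplit, hpos, hneg]; ring

noncomputable def Kf (T x : ℝ) : ℝ :=
  if x = 0 then T else 2 * ((1 - Real.cos (T * x)) / (T * x ^ 2))

lemma Kf_eq {T : ℝ} (hT : 0 < T) (x : ℝ) :
    ∫ t in (-T)..T, (1 - |t| / T) * Real.cos (t * x) = Kf T x := by
  unfold Kf
  split_ifs with h
  · subst h; exact kernel_zero hT
  · exact kernel_eq hT h

lemma Kf_nonneg {T : ℝ} (hT : 0 < T) (x : ℝ) : 0 ≤ Kf T x := by
  unfold Kf
  split_ifs with h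
  · exact hT.le
  · have h1 : Real.cos (T * x) ≤ 1 := Real.cos_le_one _
    have h2 : 0 < T * x ^ 2 := mul_pos hT (by positivity)
    have : 0 ≤ 1 - Real.cos (T * x) := by linarith
    positivity

lemma Kf_le {T : ℝ} (hT : 0 < T) (x : ℝ) : Kf T x ≤ T := by
  unfold Kf
  split_ifs with h
  · exact le_refl T
  · have h1 : 1 - Real.cos (T * x) ≤ (T * x) ^ 2 / 2 := one_sub_cos_le
    have h2 : 0 < T * x ^ 2 := mul_pos hT (by positivity)
    rw [mul_div_assoc', div_le_iff₀ h2]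
    nlinarith [h1]

lemma Kf_lb {T x : ℝ} (hT : 0 < T) (hx : |x| ≤ 1 / T) : 2 * T / 3 ≤ Kf T x := by
  unfold Kf
  split_ifs with h
  · linarith
  · have hu : |T * x| ≤ 1 := by
      rw [abs_mul, abs_of_pos hT]
      calc T * |x| ≤ T * (1 / T) := by nlinarith [abs_nonneg x]
        _ = 1 := by field_simp
    have h1 : (T * x) ^ 2 / 3 ≤ 1 - Real.cos (T * x) := cos_lb hu
    have h2 : 0 < T * x ^ 2 := mul_pos hT (by positivity)
    rw [mul_div_assoc', le_div_iff₀ h2]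
    nlinarith [h1]

lemma Kf_measurable (T : ℝ) : Measurable (Kf T) := by
  unfold Kf
  refine Measurable.ite (measurableSet_eq) measurable_const ?_
  apply Measurable.const_mul
  exact (measurable_const.sub (Real.measurable_cos.comp (measurable_const_mul T))).div
    ((measurable_id.pow_const 2).const_mul T)

lemma norm_cexp_I_mul (s xv : ℝ) : ‖Complex.exp (Complex.I * s * xv)‖ = 1 := by
  rw [show Complex.I * s * xv = ((s * xv : ℝ) : ℂ) * Complex.I by push_cast; ring,
    Complex.norm_exp_ofReal_mul_I]

lemma esseen {Ω : Type*} [MeasurableSpace Ω] (P : Measure Ω) [IsProbabilityMeasure P]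
    (X : Ω → ℝ) (hXm : Measurable X) (T a : ℝ) (hT : 0 < T) :
    2 * T / 3 * (P {ω | |X ω - a| ≤ 1 / T}).toReal
      ≤ ∫ s in (-T)..T, ‖∫ ω, Complex.exp (Complex.I * s * X ω) ∂P‖ := by
  set g : ℝ → ℂ := fun s => ∫ ω, Complex.exp (Complex.I * s * X ω) ∂P with hg
  have hTle : -T ≤ T := by linarith
  -- integrability of the exponential
  have hexpm : ∀ s : ℝ, Measurable fun ω => Complex.exp (Complex.I * s * X ω) := by
    intro s
    exact Complex.measurable_exp.comp
      ((measurable_const.mul (Complex.measurable_ofReal.comp hXm)))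
  have hexpint : ∀ s : ℝ, Integrable (fun ω => Complex.exp (Complex.I * s * X ω)) P := by
    intro s
    refine ⟨(hexpm s).aestronglyMeasurable, HasFiniteIntegral.of_bounded (C := 1) ?_⟩
    exact ae_of_all _ fun ω => le_of_eq (norm_cexp_I_mul s (X ω))
  have hgle : ∀ s, ‖g s‖ ≤ 1 := by
    intro s
    calc ‖g s‖ ≤ ∫ ω, ‖Complex.exp (Complex.I * s * X ω)‖ ∂P :=
          norm_integral_le_integral_norm _
      _ = ∫ ω, (1 : ℝ) ∂P := by
          congr 1; funext ω; exact norm_cexp_I_mul s (X ω)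
      _ = 1 := by simp
  -- continuity of g
  have hgcont : Continuous g := by
    refine continuous_of_dominated (fun s => (hexpm s).aestronglyMeasurable)
      (fun s => ae_of_all _ fun ω => le_of_eq (norm_cexp_I_mul s (X ω)))
      (integrable_const 1) ?_
    exact ae_of_all _ fun ω => by
      exact Complex.continuous_exp.comp
        ((continuous_const.mul Complex.continuous_ofReal).mul continuous_const)
  -- bound on the cosine integral
  have hcosint : ∀ s : ℝ, Integrable (fun ω => Real.cos (s * (X ω - a))) P := by
    intro s
    refine ⟨(Real.measurable_cos.comp ((hXm.sub_const a).const_mul s)).aestronglyMeasurable,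
      HasFiniteIntegral.of_bounded (C := 1) (ae_of_all _ fun ω => ?_)⟩
    rw [Real.norm_eq_abs]; exact Real.abs_cos_le_one _
  have hcosle : ∀ s : ℝ, |∫ ω, Real.cos (s * (X ω - a)) ∂P| ≤ ‖g s‖ := by
    intro s
    have heq : ∀ ω : Ω, Real.cos (s * (X ω - a))
        = (Complex.exp (Complex.I * s * X ω) * Complex.exp (-(Complex.I * s * a))).re := by
      intro ω
      rw [← Complex.exp_add,
        show Complex.I * s * X ω + -(Complex.I * s * a) = ((s * (X ω - a) : ℝ) : ℂ) * Complex.I by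
          push_cast; ring,
        Complex.exp_ofReal_mul_I_re]
    have hint2 : Integrable (fun ω => Complex.exp (Complex.I * s * X ω)
        * Complex.exp (-(Complex.I * s * a))) P := (hexpint s).mul_const _
    have : ∫ ω, Real.cos (s * (X ω - a)) ∂P
        = (g s * Complex.exp (-(Complex.I * s * a))).re := by
      calc ∫ ω, Real.cos (s * (X ω - a)) ∂P
          = ∫ ω, (Complex.exp (Complex.I * s * X ω) * Complex.exp (-(Complex.I * s * a))).re ∂P := by
            congr 1; funext ω; exact heq ω
        _ = (∫ ω, Complex.exp (Complex.I * s * X ω) * Complex.exp (-(Complex.I * s * a)) ∂P).re := by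
            simpa using (integral_re hint2)
        _ = (g s * Complex.exp (-(Complex.I * s * a))).re := by
            rw [integral_mul_const]
    rw [this]
    calc |(g s * Complex.exp (-(Complex.I * s * a))).re|
        ≤ ‖g s * Complex.exp (-(Complex.I * s * a))‖ := Complex.abs_re_le_norm _
      _ = ‖g s‖ * ‖Complex.exp (-(Complex.I * s * a))‖ := norm_mul _ _
      _ = ‖g s‖ := by
          rw [show -(Complex.I * s * a) = ((-(s * a) : ℝ) : ℂ) * Complex.I by push_cast; ring,
            Complex.norm_exp_ofReal_mul_I, mul_one]
  -- Fubini setup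
  set ν := (volume : Measure ℝ).restrict (Set.Ioc (-T) T) with hν
  haveI : IsFiniteMeasure ν := ⟨by
    rw [hν, Measure.restrict_apply_univ]; exact measure_Ioc_lt_top⟩
  set F : Ω → ℝ → ℝ := fun ω t => (1 - |t| / T) * Real.cos (t * (X ω - a)) with hF
  have hFmeas : Measurable (Function.uncurry F) := by
    apply Measurable.mul
    · exact (measurable_const.sub ((measurable_abs.comp measurable_snd).div_const T))
    · exact Real.measurable_cos.comp
        (measurable_snd.mul ((hXm.comp measurable_fst).sub_const a))
  have haeIoc : ∀ᵐ p : Ω × ℝ ∂(P.prod ν), p.2 ∈ Set.Ioc (-T) T := by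
    rw [ae_iff]
    have hnull : (P.prod ν) ((Set.univ : Set Ω) ×ˢ (Set.Ioc (-T) T)ᶜ) = 0 := by
      rw [Measure.prod_prod, hν, Measure.restrict_apply (measurableSet_Ioc.compl)]
      simp
    exact measure_mono_null (fun p hp => Set.mem_prod.mpr ⟨Set.mem_univ p.1, hp⟩) hnull
  have hFint : Integrable (Function.uncurry F) (P.prod ν) := by
    refine ⟨hFmeas.aestronglyMeasurable, HasFiniteIntegral.of_bounded (C := 1) ?_⟩
    filter_upwards [haeIoc] with p hp
    have h1 : |p.2| ≤ T := abs_le.mpr ⟨hp.1.le, hp.2⟩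
    have h2 : 0 ≤ |p.2| / T := by positivity
    have h3 : |p.2| / T ≤ 1 := (div_le_one hT).mpr h1
    rw [Real.norm_eq_abs]
    have hup : Function.uncurry F p = (1 - |p.2| / T) * Real.cos (p.2 * (X p.1 - a)) := rfl
    rw [hup, abs_mul]
    calc |1 - |p.2| / T| * |Real.cos (p.2 * (X p.1 - a))| ≤ 1 * 1 := by
          apply mul_le_mul _ (Real.abs_cos_le_one _) (abs_nonneg _) one_pos.le
          rw [abs_of_nonneg (by linarith)]; linarith
      _ = 1 := mul_one 1
  have hswap : ∫ ω, (∫ t, F ω t ∂ν) ∂P = ∫ t, (∫ ω, F ω t ∂P) ∂ν :=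
    integral_integral_swap hFint
  have hinner : ∀ ω, ∫ t, F ω t ∂ν = Kf T (X ω - a) := by
    intro ω
    rw [← Kf_eq hT (X ω - a), intervalIntegral.integral_of_le hTle]
  -- Chebyshev step
  set S : Set Ω := {ω | |X ω - a| ≤ 1 / T} with hS
  have hSmeas : MeasurableSet S := by
    have : S = (fun ω => |X ω - a|) ⁻¹' Set.Iic (1 / T) := rfl
    rw [this]
    exact ((hXm.sub_const a).abs) measurableSet_Iic
  have hKint : Integrable (fun ω => Kf T (X ω - a)) P := by
    refine ⟨((Kf_measurable T).comp (hXm.sub_const a)).aestronglyMeasurable,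
      HasFiniteIntegral.of_bounded (C := T) (ae_of_all _ fun ω => ?_)⟩
    rw [Real.norm_eq_abs, abs_of_nonneg (Kf_nonneg hT _)]
    exact Kf_le hT _
  have hcheb : 2 * T / 3 * (P S).toReal ≤ ∫ ω, Kf T (X ω - a) ∂P := by
    calc 2 * T / 3 * (P S).toReal = ∫ _ω in S, (2 * T / 3) ∂P := by
          rw [setIntegral_const, smul_eq_mul, mul_comm]; rfl
      _ ≤ ∫ ω in S, Kf T (X ω - a) ∂P := by
          refine setIntegral_mono_on (integrableOn_const (measure_ne_top _ _))
            (hKint.integrableOn) hSmeas fun ω hω => Kf_lb hT hω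
      _ ≤ ∫ ω, Kf T (X ω - a) ∂P :=
          setIntegral_le_integral hKint (ae_of_all _ fun ω => Kf_nonneg hT _)
  -- upper bound via Fubini
  have hupper : ∫ ω, Kf T (X ω - a) ∂P ≤ ∫ s in (-T)..T, ‖g s‖ := by
    have h1 : ∫ ω, Kf T (X ω - a) ∂P = ∫ t, (∫ ω, F ω t ∂P) ∂ν := by
      rw [← hswap]; congr 1; funext ω; exact (hinner ω).symm
    rw [h1, intervalIntegral.integral_of_le hTle]
    refine setIntegral_mono_on ?_ ?_ measurableSet_Ioc ?_
    · exact hFint.integral_prod_right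
    · exact ⟨(hgcont.norm).aestronglyMeasurable.restrict,
        HasFiniteIntegral.of_bounded (C := 1) (ae_of_all _ fun s => by
          rw [Real.norm_eq_abs, abs_of_nonneg (norm_nonneg _)]; exact hgle s)⟩
    · intro t ht
      have hcm : ∫ ω, F ω t ∂P = (1 - |t| / T) * ∫ ω, Real.cos (t * (X ω - a)) ∂P := by
        exact integral_const_mul _ _
      rw [hcm]
      have h1 : |t| ≤ T := abs_le.mpr ⟨ht.1.le, ht.2⟩
      have hc0 : 0 ≤ 1 - |t| / T := by
        have : |t| / T ≤ 1 := (div_le_one hT).mpr h1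
        linarith
      have hc1 : 1 - |t| / T ≤ 1 := by
        have : 0 ≤ |t| / T := by positivity
        linarith
      set v := ∫ ω, Real.cos (t * (X ω - a)) ∂P
      rcases le_or_gt 0 v with hv | hv
      · calc (1 - |t| / T) * v ≤ 1 * v := mul_le_mul_of_nonneg_right hc1 hv
          _ = v := one_mul v
          _ ≤ |v| := le_abs_self v
          _ ≤ ‖g t‖ := hcosle t
      · calc (1 - |t| / T) * v ≤ 0 := mul_nonpos_of_nonneg_of_nonpos hc0 hv.le
          _ ≤ ‖g t‖ := norm_nonneg _
  exact hcheb.trans hupper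


/-- (Remark 2.) Let `X` be a random variable with `|X| ≤ 1`, characteristic
function `g_X` and `φ_X(T) = ∫_{-T}^T |g_X(t)| dt`. If there is a nondecreasing positive
function `φ` on `(0,∞)` and `0 ≤ ε < 1` with `φ_X(bt) ≤ b^ε φ(t)` for all `t ≥ 1`, `b ≥ 1`,
then the distribution function of `X` is Lipschitz of order `1 - ε`: there is `C` with
`|F_X(x) - F_X(y)| ≤ C |x - y|^{1-ε}` for all `x, y`. -/
theorem stmt_6 {Ω : Type*} [MeasurableSpace Ω] (P : Measure Ω) [IsProbabilityMeasure P]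
    (X : Ω → ℝ) (hXm : Measurable X) (hX1 : ∀ᵐ ω ∂P, |X ω| ≤ 1)
    (φ : ℝ → ℝ) (hφpos : ∀ t, 0 < t → 0 < φ t) (hφmono : MonotoneOn φ (Set.Ioi 0))
    (ε : ℝ) (hε0 : 0 ≤ ε) (hε1 : ε < 1)
    (hφX : ∀ t : ℝ, 1 ≤ t → ∀ b : ℝ, 1 ≤ b →
      (∫ s in (-(b * t))..(b * t), ‖∫ ω, Complex.exp (Complex.I * (s : ℂ) * (X ω : ℂ)) ∂P‖) ≤
        b ^ ε * φ t) :
    ∃ C : ℝ, ∀ x y : ℝ,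
      |(P (X ⁻¹' Set.Iic x)).toReal - (P (X ⁻¹' Set.Iic y)).toReal| ≤
        C * |x - y| ^ (1 - ε) := by

  have hφ1 : 0 < φ 1 := hφpos 1 one_pos
  refine ⟨max 1 (3 / 2 * φ 1), ?_⟩
  set C := max 1 (3 / 2 * φ 1) with hC
  have hC1 : (1 : ℝ) ≤ C := le_max_left _ _
  have hCφ : 3 / 2 * φ 1 ≤ C := le_max_right _ _
  have hF1 : ∀ s : Set Ω, (P s).toReal ≤ 1 := fun s => by
    simpa using ENNReal.toReal_mono ENNReal.one_ne_top prob_le_one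
  suffices key : ∀ x y : ℝ, y ≤ x →
      (P (X ⁻¹' Set.Iic x)).toReal - (P (X ⁻¹' Set.Iic y)).toReal ≤ C * |x - y| ^ (1 - ε) by
    intro x y
    rcases le_total y x with hxy | hxy
    · have hmono : (P (X ⁻¹' Set.Iic y)).toReal ≤ (P (X ⁻¹' Set.Iic x)).toReal :=
        ENNReal.toReal_mono (measure_ne_top _ _)
          (measure_mono (Set.preimage_mono (Set.Iic_subset_Iic.mpr hxy)))
      rw [abs_of_nonneg (by linarith)]
      exact key x y hxy
    · have hmono : (P (X ⁻¹' Set.Iic x)).toReal ≤ (P (X ⁻¹' Set.Iic y)).toReal :=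
        ENNReal.toReal_mono (measure_ne_top _ _)
          (measure_mono (Set.preimage_mono (Set.Iic_subset_Iic.mpr hxy)))
      rw [abs_of_nonpos (by linarith), neg_sub, abs_sub_comm]
      exact key y x hxy
  intro x y hyx
  set h : ℝ := x - y with hh
  have hh0 : 0 ≤ h := by simp [hh]; linarith
  have habs : |x - y| = h := abs_of_nonneg hh0
  rw [habs]
  rcases eq_or_lt_of_le hh0 with hzero | hpos
  · -- h = 0
    have hxy : x = y := by simp [hh] at hzero; linarith [hzero]
    rw [hxy, sub_self]
    have : h = 0 := hzero.symm
    rw [this, Real.zero_rpow (by linarith : (1 : ℝ) - ε ≠ 0), mul_zero]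
  rcases le_or_gt 1 h with hbig | hsmall
  · -- h ≥ 1
    have h1 : (1 : ℝ) ≤ h ^ (1 - ε) := Real.one_le_rpow hbig (by linarith)
    have hd : (P (X ⁻¹' Set.Iic x)).toReal - (P (X ⁻¹' Set.Iic y)).toReal ≤ 1 := by
      have := hF1 (X ⁻¹' Set.Iic x)
      have h0 := ENNReal.toReal_nonneg (a := P (X ⁻¹' Set.Iic y))
      linarith
    calc (P (X ⁻¹' Set.Iic x)).toReal - (P (X ⁻¹' Set.Iic y)).toReal ≤ 1 := hd
      _ = 1 * 1 := (mul_one 1).symm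
      _ ≤ C * h ^ (1 - ε) := mul_le_mul hC1 h1 one_pos.le (le_trans zero_le_one hC1)
  · -- 0 < h ≤ 1
    set T : ℝ := 2 / h with hT
    have hTpos : 0 < T := by positivity
    have hT1 : 1 ≤ T := by rw [hT, le_div_iff₀ hpos]; linarith
    set a : ℝ := (x + y) / 2 with ha
    have hinv : 1 / T = h / 2 := by rw [hT]; field_simp
    set S : Set Ω := {ω | |X ω - a| ≤ 1 / T} with hS
    -- step 1 : diff ≤ P S
    have hstep1 : (P (X ⁻¹' Set.Iic x)).toReal - (P (X ⁻¹' Set.Iic y)).toReal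
        ≤ (P S).toReal := by
      have hsub : X ⁻¹' Set.Iic x ⊆ X ⁻¹' Set.Iic y ∪ X ⁻¹' Set.Ioc y x := by
        intro ω hω
        rcases le_or_gt (X ω) y with h1 | h1
        · exact Or.inl h1
        · exact Or.inr ⟨h1, hω⟩
      have hle : P (X ⁻¹' Set.Iic x)
          ≤ P (X ⁻¹' Set.Iic y) + P (X ⁻¹' Set.Ioc y x) :=
        (measure_mono hsub).trans (measure_union_le _ _)
      have hler : (P (X ⁻¹' Set.Iic x)).toReal
          ≤ (P (X ⁻¹' Set.Iic y)).toReal + (P (X ⁻¹' Set.Ioc y x)).toReal := by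
        have := ENNReal.toReal_mono
          (by exact ENNReal.add_ne_top.mpr ⟨measure_ne_top _ _, measure_ne_top _ _⟩) hle
        rwa [ENNReal.toReal_add (measure_ne_top _ _) (measure_ne_top _ _)] at this
      have hsub2 : X ⁻¹' Set.Ioc y x ⊆ S := by
        intro ω hω
        have h1 : y < X ω := hω.1
        have h2 : X ω ≤ x := hω.2
        show |X ω - a| ≤ 1 / T
        rw [hinv, abs_le]
        constructor
        · rw [ha]; linarith
        · rw [ha]; linarith
      have := ENNReal.toReal_mono (measure_ne_top P S) (measure_mono hsub2)
      linarith
    -- step 2 : esseen + hypothesis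
    have hess := esseen P X hXm T a hTpos
    have hhyp := hφX 1 le_rfl T hT1
    rw [mul_one] at hhyp
    have hPS : 2 * T / 3 * (P S).toReal ≤ T ^ ε * φ 1 := le_trans hess hhyp
    have hPS2 : (P S).toReal ≤ T ^ ε * φ 1 / (2 * T / 3) := by
      rw [le_div_iff₀ (by positivity)]
      linarith [hPS]
    -- step 3 : arithmetic
    have e1 : T ^ ε * φ 1 / (2 * T / 3) = 3 / 2 * φ 1 * T ^ (ε - 1) := by
      rw [Real.rpow_sub hTpos, Real.rpow_one]
      field_simp
    have e2 : T ^ (ε - 1) = (h / 2) ^ (1 - ε) := by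
      rw [show ε - 1 = -(1 - ε) by ring, Real.rpow_neg hTpos.le,
        ← Real.inv_rpow hTpos.le, show T⁻¹ = h / 2 by rw [hT, inv_div]]
    have e3 : (h / 2) ^ (1 - ε) ≤ h ^ (1 - ε) :=
      Real.rpow_le_rpow (by positivity) (by linarith) (by linarith)
    have e4 : 3 / 2 * φ 1 * (h / 2) ^ (1 - ε) ≤ C * h ^ (1 - ε) := by
      have hp1 : 0 ≤ (h / 2) ^ (1 - ε) := Real.rpow_nonneg (by positivity) _
      have hp2 : 0 ≤ h ^ (1 - ε) := Real.rpow_nonneg (by positivity) _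
      calc 3 / 2 * φ 1 * (h / 2) ^ (1 - ε) ≤ 3 / 2 * φ 1 * h ^ (1 - ε) := by
            apply mul_le_mul_of_nonneg_left e3 (by positivity)
        _ ≤ C * h ^ (1 - ε) := mul_le_mul_of_nonneg_right hCφ hp2
    calc (P (X ⁻¹' Set.Iic x)).toReal - (P (X ⁻¹' Set.Iic y)).toReal
        ≤ (P S).toReal := hstep1
      _ ≤ T ^ ε * φ 1 / (2 * T / 3) := hPS2
      _ = 3 / 2 * φ 1 * T ^ (ε - 1) := e1
      _ = 3 / 2 * φ 1 * (h / 2) ^ (1 - ε) := by rw [e2]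
      _ ≤ C * h ^ (1 - ε) := e4
end

section
/- Let L(t) = ∏_{j=1}^{∞} cos(2π · 3^{-j} t) be the characteristic function of the Cantor distribution. Then for all real t with |t| ≥ 8.5, one has |L(t)| ≤ e^{-0.027}. -/
open MeasureTheory Real Set

private lemma neg_log_cos_le {x : ℝ} (hx : |x| ≤ 1) :
    (1:ℝ)/2 ≤ Real.cos x ∧ -Real.log (Real.cos x) ≤ x ^ 2 := by
  have hx2 : x ^ 2 ≤ 1 := by nlinarith [sq_abs x, abs_nonneg x]
  have h1 : 1 - x ^ 2 / 2 ≤ Real.cos x := Real.one_sub_sq_div_two_le_cos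
  have hc : (1:ℝ)/2 ≤ Real.cos x := by linarith
  have hcpos : 0 < Real.cos x := by linarith
  refine ⟨hc, ?_⟩
  have hlog : Real.log (Real.cos x)⁻¹ ≤ (Real.cos x)⁻¹ - 1 :=
    Real.log_le_sub_one_of_pos (by positivity)
  rw [Real.log_inv] at hlog
  have h2 : (Real.cos x)⁻¹ - 1 = (1 - Real.cos x) / Real.cos x := by
    field_simp
  have h3 : (1 - Real.cos x) / Real.cos x ≤ x ^ 2 := by
    rw [div_le_iff₀ hcpos]
    nlinarith [mul_le_mul_of_nonneg_left hc (sq_nonneg x)]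
  linarith

/-- The characteristic function `L(t) = ∏_{j=1}^∞ cos(2π 3⁻ʲ t)` of the
Cantor distribution satisfies `|L(t)| ≤ e^{-0.027}` for all `|t| ≥ 8.5`. -/
theorem stmt_7 :
    ∀ t : ℝ, 8.5 ≤ |t| →
      |∏' j : ℕ, Real.cos (2 * Real.pi * t / 3 ^ (j + 1))| ≤ Real.exp (-0.027) := by
  classical
  intro t ht
  set f : ℕ → ℝ := fun j => Real.cos (2 * Real.pi * t / 3 ^ (j + 1)) with hf
  have habs : ∀ j : ℕ, |2 * Real.pi * t / 3 ^ (j + 1)| = 2 * Real.pi * |t| / 3 ^ (j + 1) := by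
    intro j
    rw [abs_div, abs_mul, abs_mul]
    simp [abs_of_nonneg Real.pi_pos.le, abs_of_nonneg (by positivity : (0:ℝ) ≤ (3:ℝ) ^ (j+1))]
  have hpi7 : 2 * Real.pi ≤ 7 := by nlinarith [Real.pi_lt_d2]
  -- the minimal J with 4|t| < 3^(J+1)
  have hP : ∃ j : ℕ, 4 * |t| < (3:ℝ) ^ (j + 1) := by
    obtain ⟨n, hn⟩ := pow_unbounded_of_one_lt (4 * |t|) (by norm_num : (1:ℝ) < 3)
    exact ⟨n, lt_of_lt_of_le hn (pow_le_pow_right₀ (by norm_num) (by omega))⟩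
  set J := Nat.find hP with hJdef
  have hJ : 4 * |t| < (3:ℝ) ^ (J + 1) := Nat.find_spec hP
  have hJ' : (3:ℝ) ^ J ≤ 4 * |t| := by
    rcases Nat.eq_zero_or_pos J with h0 | h0
    · rw [h0]; simp; linarith
    · have hmin := Nat.find_min hP (show J - 1 < J from Nat.sub_lt h0 one_pos)
      push_neg at hmin
      rwa [Nat.sub_add_cancel h0] at hmin
  have htpos : 0 < |t| := by linarith
  -- bound the J-th factor by √3/2
  have hfJ : |f J| ≤ Real.sqrt 3 / 2 := by
    set x := 2 * Real.pi * t / 3 ^ (J + 1) with hx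
    have hxabs : |x| = 2 * Real.pi * |t| / 3 ^ (J + 1) := habs J
    have hub : |x| < Real.pi / 2 := by
      rw [hxabs, div_lt_iff₀ (by positivity)]
      nlinarith [Real.pi_pos, hJ]
    have hlb : Real.pi / 6 ≤ |x| := by
      rw [hxabs, le_div_iff₀ (by positivity)]
      have h31 : (3:ℝ) ^ (J + 1) = 3 ^ J * 3 := pow_succ 3 J
      nlinarith [Real.pi_pos]
    have hcos1 : Real.cos |x| = Real.cos x := Real.cos_abs x
    have h2 : 0 < Real.cos x := by
      rw [← hcos1]
      exact Real.cos_pos_of_mem_Ioo ⟨by linarith [abs_nonneg x, Real.pi_pos], hub⟩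
    have hcosx : |f J| = Real.cos |x| := by
      simp only [hf]
      rw [abs_of_pos h2, hcos1]
    rw [hcosx, ← Real.cos_pi_div_six]
    exact Real.cos_le_cos_of_nonneg_of_le_pi (by positivity)
      (by nlinarith [Real.pi_pos]) hlb
  -- choose the tail cutoff k > J so that all tail arguments are small
  obtain ⟨m, hm⟩ := pow_unbounded_of_one_lt (7 * |t|) (by norm_num : (1:ℝ) < 3)
  set k := J + 1 + m with hkdef
  have hk3 : 7 * |t| < (3:ℝ) ^ (k + 1) :=
    lt_of_lt_of_le hm (pow_le_pow_right₀ (by norm_num) (by omega))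
  have hJk : J < k := by omega
  set c : ℝ := 2 * Real.pi * |t| / 3 ^ (k + 1) with hc
  have hc1 : c < 1 := by
    rw [hc, div_lt_one (by positivity)]
    nlinarith
  have hc0 : 0 ≤ c := by rw [hc]; positivity
  have hargeq : ∀ n : ℕ, |2 * Real.pi * t / 3 ^ (n + k + 1)| = c * (1/3) ^ n := by
    intro n
    rw [habs (n + k)]
    rw [show (3:ℝ) ^ (n + k + 1) = 3 ^ (k + 1) * 3 ^ n by
      rw [← pow_add]; congr 1; omega]
    rw [show ((1:ℝ)/3) ^ n = ((3:ℝ) ^ n)⁻¹ by rw [one_div, inv_pow]]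
    rw [div_mul_eq_div_div, div_eq_mul_inv (2 * Real.pi * |t| / 3 ^ (k + 1)), ← hc]
  have harg_le : ∀ n : ℕ, |2 * Real.pi * t / 3 ^ (n + k + 1)| ≤ 1 := by
    intro n
    rw [hargeq n]
    have h9 : ((1:ℝ)/3) ^ n ≤ 1 := pow_le_one₀ (by norm_num) (by norm_num)
    nlinarith
  have hgpos : ∀ n : ℕ, (1:ℝ)/2 ≤ f (n + k) := fun n => (neg_log_cos_le (harg_le n)).1
  have hglog : ∀ n : ℕ, -Real.log (f (n + k)) ≤ c ^ 2 * (1/9 : ℝ) ^ n := by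
    intro n
    have h := (neg_log_cos_le (harg_le n)).2
    have h9 : (((1:ℝ)/3) ^ n) ^ 2 = ((1:ℝ)/9) ^ n := by
      rw [← pow_mul, Nat.mul_comm, pow_mul]; norm_num
    have h2 : (2 * Real.pi * t / 3 ^ (n + k + 1)) ^ 2 = c ^ 2 * (1/9 : ℝ) ^ n := by
      rw [← sq_abs, hargeq n, mul_pow, h9]
    rw [← h2]
    exact h
  have hle1 : ∀ j : ℕ, f j ≤ 1 := fun j => Real.cos_le_one _
  have hsum : Summable (fun n : ℕ => Real.log (f (n + k))) := by
    have hb : Summable (fun n : ℕ => c ^ 2 * (1/9 : ℝ) ^ n) :=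
      (summable_geometric_of_lt_one (by norm_num) (by norm_num)).mul_left _
    have h1 : Summable (fun n : ℕ => -Real.log (f (n + k))) :=
      hb.of_nonneg_of_le
        (fun n => neg_nonneg.2 (Real.log_nonpos (by linarith [hgpos n]) (hle1 (n + k))))
        hglog
    simpa using h1.neg
  have hmul : Multipliable (fun n : ℕ => f (n + k)) :=
    Real.multipliable_of_summable_log (f := fun n => f (n + k))
      (fun n => by linarith [hgpos n]) hsum
  have hTeq : (∏' n : ℕ, f (n + k)) = Real.exp (∑' n : ℕ, Real.log (f (n + k))) := by
    have h := Real.rexp_tsum_eq_tprod (f := fun n => f (n + k))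
      (fun n => by linarith [hgpos n]) hsum
    exact h.symm
  have hS : (∑' n : ℕ, Real.log (f (n + k))) ≤ 0 :=
    tsum_nonpos fun n => Real.log_nonpos (by linarith [hgpos n]) (hle1 (n + k))
  have hT1 : (∏' n : ℕ, f (n + k)) ≤ 1 := by
    rw [hTeq]; exact Real.exp_le_one_iff.2 hS
  have hT0 : 0 < ∏' n : ℕ, f (n + k) := by
    rw [hTeq]; exact Real.exp_pos _
  have heq : (∏' j : ℕ, f j) = (∏ i ∈ Finset.range k, f i) * ∏' n : ℕ, f (n + k) :=
    hmul.hasProd.prod_range_mul.tprod_eq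
  have hrange : |∏ i ∈ Finset.range k, f i| ≤ Real.sqrt 3 / 2 := by
    rw [Finset.abs_prod]
    have hJmem : J ∈ Finset.range k := Finset.mem_range.2 hJk
    rw [← Finset.mul_prod_erase _ _ hJmem]
    have herase : (∏ i ∈ (Finset.range k).erase J, |f i|) ≤ 1 :=
      Finset.prod_le_one (fun i _ => abs_nonneg _)
        (fun i _ => by simp only [hf]; exact Real.abs_cos_le_one _)
    calc |f J| * ∏ i ∈ (Finset.range k).erase J, |f i|
        ≤ (Real.sqrt 3 / 2) * 1 :=
          mul_le_mul hfJ herase (Finset.prod_nonneg fun i _ => abs_nonneg _) (by positivity)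
      _ = Real.sqrt 3 / 2 := mul_one _
  have hexp : (0.973 : ℝ) ≤ Real.exp (-0.027) := by
    nlinarith [Real.add_one_le_exp (-0.027 : ℝ)]
  have hsq : Real.sqrt 3 / 2 ≤ (0.973 : ℝ) := by
    nlinarith [Real.sq_sqrt (by norm_num : (0:ℝ) ≤ 3), Real.sqrt_nonneg 3]
  calc |∏' j : ℕ, f j| = |∏ i ∈ Finset.range k, f i| * |∏' n : ℕ, f (n + k)| := by
        rw [heq, abs_mul]
    _ ≤ (Real.sqrt 3 / 2) * 1 :=
        mul_le_mul hrange (by rw [abs_of_pos hT0]; exact hT1) (abs_nonneg _) (by positivity)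
    _ = Real.sqrt 3 / 2 := mul_one _
    _ ≤ Real.exp (-0.027) := by linarith
end

section
/- Let n ≥ 2, let A = (a_{ij})_{i,j=1}^n be a nonzero symmetric real matrix such that a_{11}^{2k+1} + a_{22}^{2k+1} + ... + a_{nn}^{2k+1} ≠ 0 for every k = 0, 1, 2, ..., and let Q(x_1,...,x_n) = Σ_{i,j=1}^n a_{ij} x_i x_j. Let F be a symmetric probability distribution on ℝ belonging to the class 𝓕 (F has finite moments of all orders and is uniquely determined by its moments), and let Z_1,...,Z_n be i.i.d. with distribution F. Then for any i.i.d. symmetric random variables X_1,...,X_n, the equality in distribution Q(Z_1,...,Z_n) =_d Q(X_1,...,X_n) implies Z_1 =_d X_1 (i.e., the pair (Q,F) has the characterization property). -/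
open MeasureTheory Real Set




lemma monomial_integrable (μ : Measure ℝ) [IsProbabilityMeasure μ]
    (hμ : ∀ p : ℕ, Integrable (fun x : ℝ => x ^ p) μ) :
    ∀ (n : ℕ) (d : Fin n → ℕ),
      Integrable (fun z : Fin n → ℝ => ∏ i, z i ^ d i) (Measure.pi fun _ => μ) ∧
      (∫ z : Fin n → ℝ, ∏ i, z i ^ d i ∂(Measure.pi fun _ => μ)) =
        ∏ i, ∫ x : ℝ, x ^ d i ∂μ := by
  intro n
  induction n with
  | zero =>
      intro d
      simp only [Finset.univ_eq_empty, Finset.prod_empty]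
      constructor
      · exact integrable_const 1
      · simp
  | succ m ih =>
      intro d
      have mp := measurePreserving_piFinSuccAbove (fun _ : Fin (m+1) => μ) 0
      set e := MeasurableEquiv.piFinSuccAbove (fun _ : Fin (m+1) => ℝ) 0 with he
      have key : ∀ z : Fin (m+1) → ℝ,
          (∏ i, z i ^ d i) =
            (fun w : ℝ × (Fin m → ℝ) => w.1 ^ d 0 * ∏ j, w.2 j ^ d (Fin.succAbove 0 j)) (e z) := by
        intro z
        simp only [he, MeasurableEquiv.piFinSuccAbove_apply]
        rw [Fin.prod_univ_succAbove (fun i => z i ^ d i) 0]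
        rfl
      have hint2 : Integrable
          (fun w : ℝ × (Fin m → ℝ) => w.1 ^ d 0 * ∏ j, w.2 j ^ d (Fin.succAbove 0 j))
          (μ.prod (Measure.pi fun _ : Fin m => μ)) :=
        Integrable.mul_prod (hμ (d 0)) (ih (fun j => d (Fin.succAbove 0 j))).1
      constructor
      · have := (mp.integrable_comp_emb e.measurableEmbedding).2 hint2
        simpa only [Function.comp_def, ← key] using this
      · calc (∫ z : Fin (m+1) → ℝ, ∏ i, z i ^ d i ∂(Measure.pi fun _ => μ))
            = ∫ w : ℝ × (Fin m → ℝ),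
                w.1 ^ d 0 * ∏ j, w.2 j ^ d (Fin.succAbove 0 j)
                ∂(μ.prod (Measure.pi fun _ : Fin m => μ)) := by
              rw [← mp.integral_comp']
              exact integral_congr_ae (Filter.Eventually.of_forall key)
          _ = (∫ x : ℝ, x ^ d 0 ∂μ) *
                ∏ j, ∫ x : ℝ, x ^ d (Fin.succAbove 0 j) ∂μ := by
              rw [integral_prod_mul (f := fun x : ℝ => x ^ d 0)
                (g := fun y : Fin m → ℝ => ∏ j, y j ^ d (Fin.succAbove 0 j))]
              rw [(ih (fun j => d (Fin.succAbove 0 j))).2]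
          _ = ∏ i, ∫ x : ℝ, x ^ d i ∂μ := by
              rw [Fin.prod_univ_succAbove (fun i => ∫ x : ℝ, x ^ d i ∂μ) 0]


lemma fiber_prod {n k : ℕ} (g : Fin k → Fin n) (z : Fin n → ℝ) :
    ∏ m, z (g m) = ∏ i, z i ^ (Finset.univ.filter fun m => g m = i).card := by
  rw [← Finset.prod_fiberwise_of_maps_to (fun m _ => Finset.mem_univ (g m)) (fun m => z (g m))]
  refine Finset.prod_congr rfl fun i _ => ?_
  rw [← Finset.prod_const]
  refine Finset.prod_congr rfl fun m hm => ?_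
  rw [(Finset.mem_filter.1 hm).2]

def qfCnt {n k : ℕ} (f : Fin k → Fin n × Fin n) (i : Fin n) : ℕ :=
  (Finset.univ.filter fun m => (f m).1 = i).card +
    (Finset.univ.filter fun m => (f m).2 = i).card

lemma qf_pow_expand {n : ℕ} (a : Fin n → Fin n → ℝ) (k : ℕ) (z : Fin n → ℝ) :
    (∑ i, ∑ j, a i j * z i * z j) ^ k =
      ∑ f : Fin k → Fin n × Fin n,
        (∏ m, a (f m).1 (f m).2) * ∏ i, z i ^ qfCnt f i := by
  rw [show (∑ i, ∑ j, a i j * z i * z j) = ∑ p : Fin n × Fin n, a p.1 p.2 * z p.1 * z p.2 from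
    (Fintype.sum_prod_type (fun p : Fin n × Fin n => a p.1 p.2 * z p.1 * z p.2)).symm]
  rw [Fintype.sum_pow]
  refine Fintype.sum_congr _ _ fun f => ?_
  rw [show (∏ m, a (f m).1 (f m).2 * z (f m).1 * z (f m).2)
      = (∏ m, a (f m).1 (f m).2) * ((∏ m, z (f m).1) * (∏ m, z (f m).2)) by
    rw [← Finset.prod_mul_distrib, ← Finset.prod_mul_distrib]
    exact Finset.prod_congr rfl fun m _ => by ring]
  congr 1
  rw [fiber_prod (fun m => (f m).1) z, fiber_prod (fun m => (f m).2) z,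
    ← Finset.prod_mul_distrib]
  refine Finset.prod_congr rfl fun i _ => ?_
  rw [← pow_add]
  rfl


lemma quad_moments_pos (μ : Measure ℝ) [IsProbabilityMeasure μ] (A B C : ℝ) (hA : 0 < A)
    (h : ∀ k : ℕ, Integrable (fun x : ℝ => (A * x ^ 2 + B * x + C) ^ (2 * k)) μ) :
    ∀ p : ℕ, Integrable (fun x : ℝ => x ^ p) μ := by
  intro p
  set q : ℝ → ℝ := fun x => A * x ^ 2 + B * x + C with hq
  have KEY : ∀ x : ℝ, A ^ 2 * x ^ 2 ≤ 2 * A * |q x| + B ^ 2 + 2 * A * |C| := by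
    intro x
    have P : 2 * A * |B * x| ≤ A ^ 2 * x ^ 2 + B ^ 2 := by
      rcases abs_cases (B * x) with ⟨hh, _⟩ | ⟨hh, _⟩ <;> rw [hh] <;>
        nlinarith [sq_nonneg (A * x - B), sq_nonneg (A * x + B)]
    have h1 : A * x ^ 2 ≤ |q x| + |B * x| + |C| := by
      have e : A * x ^ 2 = q x + -(B * x) + -C := by simp only [hq]; ring
      calc A * x ^ 2 ≤ |A * x ^ 2| := le_abs_self _
        _ = |q x + -(B * x) + -C| := by rw [e]
        _ ≤ |q x + -(B * x)| + |-C| := abs_add_le _ _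
        _ ≤ |q x| + |-(B * x)| + |-C| := by linarith [abs_add_le (q x) (-(B * x))]
        _ = |q x| + |B * x| + |C| := by rw [abs_neg, abs_neg]
    nlinarith [mul_le_mul_of_nonneg_left h1 (le_of_lt (by positivity : (0:ℝ) < 2 * A))]
  set D : ℝ := 2 / A with hD
  set E : ℝ := (B ^ 2 + 2 * A * |C|) / A ^ 2 with hE
  have hD0 : 0 ≤ D := by positivity
  have hE0 : 0 ≤ E := by positivity
  have hx2 : ∀ x : ℝ, x ^ 2 ≤ D * |q x| + E := by
    intro x
    have hA2 : (0:ℝ) < A ^ 2 := by positivity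
    calc x ^ 2 = (A ^ 2 * x ^ 2) / A ^ 2 := by field_simp
      _ ≤ (2 * A * |q x| + B ^ 2 + 2 * A * |C|) / A ^ 2 :=
          (div_le_div_iff_of_pos_right hA2).2 (KEY x)
      _ = D * |q x| + E := by rw [hD, hE]; field_simp; ring
  set c : ℝ := 1 + 2 ^ (p - 1) * (D ^ p + E ^ p) with hc
  set c' : ℝ := 2 ^ (p - 1) * D ^ p with hc'
  have hbound : ∀ x : ℝ, |x| ^ p ≤ c + c' * (q x) ^ (2 * p) := by
    intro x
    have habs : |q x| ^ p ≤ 1 + (q x) ^ (2 * p) := by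
      have hqeq : |q x| ^ (2 * p) = (q x) ^ (2 * p) := by
        rw [← abs_pow]
        exact abs_of_nonneg (by rw [pow_mul]; exact pow_nonneg (sq_nonneg _) _)
      rcases le_total (|q x|) 1 with hle | hge
      · have ha1 : |q x| ^ p ≤ 1 := pow_le_one₀ (abs_nonneg _) hle
        have ha2 : (0:ℝ) ≤ (q x) ^ (2 * p) := by rw [pow_mul]; exact pow_nonneg (sq_nonneg _) _
        linarith
      · have h2 : |q x| ^ p ≤ |q x| ^ (2 * p) :=
          pow_le_pow_right₀ hge (by omega)
        rw [hqeq] at h2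
        linarith
    have h1 : |x| ^ p ≤ 1 + (x ^ 2) ^ p := by
      rcases le_total (|x|) 1 with hle | hge
      · have hnn : (0:ℝ) ≤ (x ^ 2) ^ p := pow_nonneg (sq_nonneg _) _
        linarith [pow_le_one₀ (abs_nonneg x) hle (n := p)]
      · have : |x| ^ p ≤ |x| ^ (2 * p) := pow_le_pow_right₀ hge (by omega)
        have e2 : |x| ^ (2 * p) = (x ^ 2) ^ p := by rw [pow_mul, sq_abs]
        linarith [e2 ▸ this]
    have h2 : (x ^ 2) ^ p ≤ (D * |q x| + E) ^ p :=
      pow_le_pow_left₀ (sq_nonneg x) (hx2 x) p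
    have h3 : (D * |q x| + E) ^ p ≤ 2 ^ (p - 1) * ((D * |q x|) ^ p + E ^ p) :=
      add_pow_le (by positivity) hE0 p
    have h4 : (D * |q x|) ^ p = D ^ p * |q x| ^ p := mul_pow _ _ _
    have h5 : 2 ^ (p - 1) * ((D * |q x|) ^ p + E ^ p)
        ≤ 2 ^ (p - 1) * (D ^ p * (1 + (q x) ^ (2 * p)) + E ^ p) := by
      apply mul_le_mul_of_nonneg_left _ (by positivity : (0:ℝ) ≤ 2 ^ (p - 1))
      rw [h4]
      have := mul_le_mul_of_nonneg_left habs (pow_nonneg hD0 p)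
      linarith
    have expand : 2 ^ (p - 1) * (D ^ p * (1 + (q x) ^ (2 * p)) + E ^ p)
        = (2 ^ (p - 1) * (D ^ p + E ^ p)) + c' * (q x) ^ (2 * p) := by
      rw [hc']; ring
    calc |x| ^ p ≤ 1 + (x ^ 2) ^ p := h1
      _ ≤ 1 + (D * |q x| + E) ^ p := by linarith
      _ ≤ 1 + 2 ^ (p - 1) * ((D * |q x|) ^ p + E ^ p) := by linarith
      _ ≤ 1 + 2 ^ (p - 1) * (D ^ p * (1 + (q x) ^ (2 * p)) + E ^ p) := by linarith
      _ = c + c' * (q x) ^ (2 * p) := by rw [expand, hc]; ring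
  have hg : Integrable (fun x : ℝ => c + c' * (q x) ^ (2 * p)) μ :=
    (integrable_const c).add ((h p).const_mul c')
  refine Integrable.mono' hg ?_ ?_
  · exact (continuous_pow p).aestronglyMeasurable
  · refine Filter.Eventually.of_forall fun x => ?_
    rw [Real.norm_eq_abs, abs_pow]
    exact hbound x

lemma quad_moments (μ : Measure ℝ) [IsProbabilityMeasure μ] (A B C : ℝ) (hA : A ≠ 0)
    (h : ∀ k : ℕ, Integrable (fun x : ℝ => (A * x ^ 2 + B * x + C) ^ (2 * k)) μ) :
    ∀ p : ℕ, Integrable (fun x : ℝ => x ^ p) μ := by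
  rcases hA.lt_or_gt with hneg | hpos
  · refine quad_moments_pos μ (-A) (-B) (-C) (by linarith) (fun k => ?_)
    have : ∀ x : ℝ, (-A * x ^ 2 + -B * x + -C) ^ (2 * k)
        = (A * x ^ 2 + B * x + C) ^ (2 * k) := by
      intro x
      rw [show -A * x ^ 2 + -B * x + -C = -(A * x ^ 2 + B * x + C) by ring]
      exact (Even.neg_pow (even_two_mul k) _)
    simpa only [this] using h k
  · exact quad_moments_pos μ A B C hpos h

lemma odd_moment_zero (μ : Measure ℝ)
    (hs : Measure.map (fun x : ℝ => -x) μ = μ) {p : ℕ} (hp : Odd p) :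
    ∫ x, x ^ p ∂μ = 0 := by
  have h1 : ∫ x, x ^ p ∂μ = ∫ x, (-x) ^ p ∂μ := by
    conv_lhs => rw [← hs]
    rw [integral_map measurable_neg.aemeasurable
      (continuous_pow p).aestronglyMeasurable]
  have h2 : ∫ x, (-x) ^ p ∂μ = -∫ x, x ^ p ∂μ := by
    simp_rw [hp.neg_pow]
    exact integral_neg _
  linarith [h1, h2]


lemma qf_slice {m : ℕ} (a : Fin (m+1) → Fin (m+1) → ℝ) (i0 : Fin (m+1))
    (y : Fin m → ℝ) (x : ℝ) :
    (∑ i, ∑ j, a i j * (Fin.insertNth (α := fun _ => ℝ) i0 x y) i * (Fin.insertNth (α := fun _ => ℝ) i0 x y) j)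
      = a i0 i0 * x ^ 2
        + (∑ j, (a i0 (i0.succAbove j) + a (i0.succAbove j) i0) * y j) * x
        + ∑ i, ∑ j, a (i0.succAbove i) (i0.succAbove j) * y i * y j := by
  set w := Fin.insertNth (α := fun _ => ℝ) i0 x y with hw
  have hw0 : w i0 = x := Fin.insertNth_apply_same (α := fun _ => ℝ) i0 x y
  have hws : ∀ j, w (i0.succAbove j) = y j := fun j => Fin.insertNth_apply_succAbove (α := fun _ => ℝ) i0 x y j
  rw [Fin.sum_univ_succAbove (fun i => ∑ j, a i j * w i * w j) i0]
  rw [Fin.sum_univ_succAbove (fun j => a i0 j * w i0 * w j) i0]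
  have inner : ∀ i, (∑ j, a (i0.succAbove i) j * w (i0.succAbove i) * w j)
      = a (i0.succAbove i) i0 * y i * x
        + ∑ j, a (i0.succAbove i) (i0.succAbove j) * y i * y j := by
    intro i
    rw [Fin.sum_univ_succAbove (fun j => a (i0.succAbove i) j * w (i0.succAbove i) * w j) i0]
    simp only [hw0, hws]
  rw [Finset.sum_congr rfl (fun i _ => inner i)]
  simp only [hw0, hws]
  rw [Finset.sum_add_distrib, Finset.sum_mul]
  rw [Finset.sum_congr rfl (fun j _ => by ring :
    ∀ j ∈ Finset.univ, (a i0 (i0.succAbove j) + a (i0.succAbove j) i0) * y j * x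
      = a i0 (i0.succAbove j) * x * y j + a (i0.succAbove j) i0 * y j * x)]
  rw [Finset.sum_add_distrib]
  ring

section helper
variable {n : ℕ}

lemma qf_pow_integrable (μ : Measure ℝ) [IsProbabilityMeasure μ]
    (hμ : ∀ p : ℕ, Integrable (fun x : ℝ => x ^ p) μ)
    (a : Fin n → Fin n → ℝ) (k : ℕ) :
    Integrable (fun z : Fin n → ℝ => (∑ i, ∑ j, a i j * z i * z j) ^ k)
      (Measure.pi fun _ => μ) := by
  have hre : (fun z : Fin n → ℝ => (∑ i, ∑ j, a i j * z i * z j) ^ k)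
      = fun z => ∑ f : Fin k → Fin n × Fin n,
          (∏ m, a (f m).1 (f m).2) * ∏ i, z i ^ qfCnt f i := by
    funext z; exact qf_pow_expand a k z
  rw [hre]
  apply integrable_finset_sum
  intro f _
  exact ((monomial_integrable μ hμ n (qfCnt f)).1).const_mul _

lemma qf_pow_integral (μ : Measure ℝ) [IsProbabilityMeasure μ]
    (hμ : ∀ p : ℕ, Integrable (fun x : ℝ => x ^ p) μ)
    (a : Fin n → Fin n → ℝ) (k : ℕ) :
    (∫ z : Fin n → ℝ, (∑ i, ∑ j, a i j * z i * z j) ^ k ∂(Measure.pi fun _ => μ))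
      = ∑ f : Fin k → Fin n × Fin n,
          (∏ m, a (f m).1 (f m).2) * ∏ i, ∫ x : ℝ, x ^ qfCnt f i ∂μ := by
  have hre : (fun z : Fin n → ℝ => (∑ i, ∑ j, a i j * z i * z j) ^ k)
      = fun z => ∑ f : Fin k → Fin n × Fin n,
          (∏ m, a (f m).1 (f m).2) * ∏ i, z i ^ qfCnt f i := by
    funext z; exact qf_pow_expand a k z
  rw [hre, integral_finset_sum _
    (fun f _ => ((monomial_integrable μ hμ n (qfCnt f)).1).const_mul _)]
  refine Finset.sum_congr rfl fun f _ => ?_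
  rw [integral_const_mul _ _, (monomial_integrable μ hμ n (qfCnt f)).2]

end helper
lemma qfCnt_const_same {n k : ℕ} (i : Fin n) :
    qfCnt (fun _ : Fin k => (i, i)) i = k + k := by
  simp [qfCnt]

lemma qfCnt_const_ne {n k : ℕ} {i j : Fin n} (h : j ≠ i) :
    qfCnt (fun _ : Fin k => (i, i)) j = 0 := by
  simp [qfCnt, h.symm]

lemma qfCnt_le {n k : ℕ} (f : Fin k → Fin n × Fin n) (i : Fin n) :
    qfCnt f i ≤ k + k := by
  have h1 := Finset.card_filter_le Finset.univ (fun m => (f m).1 = i)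
  have h2 := Finset.card_filter_le Finset.univ (fun m => (f m).2 = i)
  simp only [Finset.card_univ, Fintype.card_fin] at h1 h2
  exact add_le_add h1 h2

lemma qfCnt_eq_max {n k : ℕ} {f : Fin k → Fin n × Fin n} {i : Fin n}
    (h : qfCnt f i = k + k) : f = fun _ => (i, i) := by
  have h1 := Finset.card_filter_le Finset.univ (fun m => (f m).1 = i)
  have h2 := Finset.card_filter_le Finset.univ (fun m => (f m).2 = i)
  simp only [Finset.card_univ, Fintype.card_fin] at h1 h2
  unfold qfCnt at h
  have e1 : (Finset.univ.filter fun m => (f m).1 = i).card = Fintype.card (Fin k) := by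
    rw [Fintype.card_fin]; omega
  have e2 : (Finset.univ.filter fun m => (f m).2 = i).card = Fintype.card (Fin k) := by
    rw [Fintype.card_fin]; omega
  have u1 := Finset.eq_univ_of_card _ e1
  have u2 := Finset.eq_univ_of_card _ e2
  funext m
  have m1 : m ∈ Finset.univ.filter fun m => (f m).1 = i := by
    rw [u1]; exact Finset.mem_univ m
  have m2 : m ∈ Finset.univ.filter fun m => (f m).2 = i := by
    rw [u2]; exact Finset.mem_univ m
  exact Prod.ext (Finset.mem_filter.1 m1).2 (Finset.mem_filter.1 m2).2

/-- (Theorem 12.) Let `n ≥ 2`, `A = (a_{ij})` a nonzero symmetric real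
matrix with `a₁₁^{2k+1} + ⋯ + a_{nn}^{2k+1} ≠ 0` for every `k = 0, 1, 2, …`, and
`Q(x) = Σ a_{ij} x_i x_j`. Let `F` be a symmetric probability distribution on `ℝ` with finite
moments of all orders which is uniquely determined by its moments, and let `Z₁,…,Z_n` be
i.i.d. with distribution `F`. Then for any i.i.d. symmetric random variables `X₁,…,X_n`
(common distribution `G`), `Q(Z₁,…,Z_n) =_d Q(X₁,…,X_n)` implies `Z₁ =_d X₁`. -/
theorem stmt_15 (n : ℕ) (hn : 2 ≤ n) (a : Fin n → Fin n → ℝ)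
    (hsymm : ∀ i j, a i j = a j i) (hA : a ≠ 0)
    (hdiag : ∀ k : ℕ, (∑ i, a i i ^ (2 * k + 1)) ≠ 0)
    (F : Measure ℝ) [IsProbabilityMeasure F]
    (hFsymm : Measure.map (fun x : ℝ => -x) F = F)
    -- `F` has finite moments of all orders:
    (hmom : ∀ p : ℕ, Integrable (fun x : ℝ => x ^ p) F)
    -- `F` is uniquely determined by its moments:
    (hdet : ∀ μ : Measure ℝ, IsProbabilityMeasure μ →
      (∀ p : ℕ, Integrable (fun x : ℝ => x ^ p) μ) →
      (∀ p : ℕ, (∫ x, x ^ p ∂μ) = ∫ x, x ^ p ∂F) → μ = F)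
    (G : Measure ℝ) [IsProbabilityMeasure G]
    (hGsymm : Measure.map (fun x : ℝ => -x) G = G)
    (hQ : Measure.map (fun z : Fin n → ℝ => ∑ i, ∑ j, a i j * z i * z j)
        (Measure.pi fun _ => F) =
      Measure.map (fun z : Fin n → ℝ => ∑ i, ∑ j, a i j * z i * z j)
        (Measure.pi fun _ => G)) :
    G = F := by
  classical
  obtain ⟨i0, hi0⟩ : ∃ i, a i i ≠ 0 := by
    by_contra h
    push_neg at h
    exact hdiag 0 (by simp [h])
  have hQmeas : Measurable (fun z : Fin n → ℝ => ∑ i, ∑ j, a i j * z i * z j) := by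
    apply Finset.measurable_sum
    intro i _
    apply Finset.measurable_sum
    intro j _
    exact (measurable_const.mul (measurable_pi_apply i)).mul (measurable_pi_apply j)
  have hQintF : ∀ k : ℕ, Integrable
      (fun z : Fin n → ℝ => (∑ i, ∑ j, a i j * z i * z j) ^ k)
      (Measure.pi fun _ => F) := fun k => qf_pow_integrable F hmom a k
  have hQintG : ∀ k : ℕ, Integrable
      (fun z : Fin n → ℝ => (∑ i, ∑ j, a i j * z i * z j) ^ k)
      (Measure.pi fun _ => G) := by
    intro k
    have h1 : Integrable (fun t : ℝ => t ^ k)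
        (Measure.map (fun z : Fin n → ℝ => ∑ i, ∑ j, a i j * z i * z j)
          (Measure.pi fun _ => F)) := by
      rw [integrable_map_measure (continuous_pow k).aestronglyMeasurable hQmeas.aemeasurable]
      exact hQintF k
    rw [hQ] at h1
    have h2 := (integrable_map_measure (continuous_pow k).aestronglyMeasurable
      hQmeas.aemeasurable).1 h1
    simpa [Function.comp_def] using h2
  have hQeqInt : ∀ k : ℕ,
      (∫ z : Fin n → ℝ, (∑ i, ∑ j, a i j * z i * z j) ^ k ∂(Measure.pi fun _ => G))
        = ∫ z : Fin n → ℝ, (∑ i, ∑ j, a i j * z i * z j) ^ k ∂(Measure.pi fun _ => F) := by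
    intro k
    have e1 := integral_map (μ := Measure.pi fun _ : Fin n => G)
      hQmeas.aemeasurable (f := fun t : ℝ => t ^ k)
      (continuous_pow k).aestronglyMeasurable
    have e2 := integral_map (μ := Measure.pi fun _ : Fin n => F)
      hQmeas.aemeasurable (f := fun t : ℝ => t ^ k)
      (continuous_pow k).aestronglyMeasurable
    rw [← e1, ← e2, hQ]
  -- finite moments of G
  obtain ⟨m, rfl⟩ : ∃ m, n = m + 1 := ⟨n - 1, by omega⟩
  have hGmom : ∀ p : ℕ, Integrable (fun x : ℝ => x ^ p) G := by
    have mp := measurePreserving_piFinSuccAbove (fun _ : Fin (m + 1) => G) i0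
    set e := MeasurableEquiv.piFinSuccAbove (fun _ : Fin (m + 1) => ℝ) i0 with he
    have hesymm : ∀ (x : ℝ) (y : Fin m → ℝ),
        e.symm (x, y) = Fin.insertNth (α := fun _ => ℝ) i0 x y := by
      intro x y
      simp [he, MeasurableEquiv.piFinSuccAbove, Fin.insertNthEquiv]
    have hprod : ∀ k : ℕ, Integrable
        (fun w : ℝ × (Fin m → ℝ) =>
          (∑ i, ∑ j, a i j * (e.symm w) i * (e.symm w) j) ^ (2 * k))
        (G.prod (Measure.pi fun _ : Fin m => G)) := by
      intro k
      have h1 := (MeasurePreserving.symm e mp).integrable_comp_emb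
        e.symm.measurableEmbedding
        (g := fun z : Fin (m + 1) → ℝ => (∑ i, ∑ j, a i j * z i * z j) ^ (2 * k))
      have h2 := h1.2 (hQintG (2 * k))
      simpa [Function.comp_def] using h2
    have hae : ∀ᵐ y ∂(Measure.pi fun _ : Fin m => G), ∀ k : ℕ,
        Integrable (fun x : ℝ =>
          (∑ i, ∑ j, a i j * (e.symm (x, y)) i * (e.symm (x, y)) j) ^ (2 * k)) G :=
      ae_all_iff.2 fun k => (hprod k).prod_left_ae
    obtain ⟨y0, hy0⟩ := hae.exists
    set B : ℝ := ∑ j, (a i0 (i0.succAbove j) + a (i0.succAbove j) i0) * y0 j with hB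
    set C : ℝ := ∑ i, ∑ j, a (i0.succAbove i) (i0.succAbove j) * y0 i * y0 j with hC
    refine quad_moments G (a i0 i0) B C hi0 (fun k => ?_)
    have hform : ∀ x : ℝ,
        (∑ i, ∑ j, a i j * (e.symm (x, y0)) i * (e.symm (x, y0)) j)
          = a i0 i0 * x ^ 2 + B * x + C := by
      intro x
      rw [hesymm x y0]
      exact qf_slice a i0 y0 x
    have h3 := hy0 k
    simp only [hform] at h3
    exact h3
  -- equality of all moments
  have key : ∀ p : ℕ, (∫ x, x ^ p ∂G) = ∫ x, x ^ p ∂F := by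
    intro p
    induction p using Nat.strong_induction_on with
    | _ p ih =>
      rcases Nat.even_or_odd p with ⟨k, hk⟩ | hodd
      · rcases Nat.eq_zero_or_pos k with hk0 | hkpos
        · subst hk0; simp at hk; subst hk; simp
        · subst hk
          -- the constant-diagonal functions
          set D : Finset (Fin k → Fin (m + 1) × Fin (m + 1)) :=
            Finset.univ.image (fun i : Fin (m + 1) => fun _ : Fin k => (i, i)) with hD
          have hknz : (∑ i, a i i ^ k) ≠ 0 := by
            rcases Nat.even_or_odd k with ⟨j, hj⟩ | ⟨j, hj⟩
            · subst hj
              have hjpos : 0 < j := by omega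
              have hpos : 0 < ∑ i, a i i ^ (j + j) := by
                refine Finset.sum_pos' (fun i _ => ?_) ⟨i0, Finset.mem_univ i0, ?_⟩
                · rw [← two_mul, pow_mul']
                  exact sq_nonneg _
                · rw [← two_mul, pow_mul']
                  exact lt_of_le_of_ne (sq_nonneg _)
                    (Ne.symm (pow_ne_zero 2 (pow_ne_zero j hi0)))
              exact ne_of_gt hpos
            · subst hj
              exact hdiag j
          have heq := hQeqInt k
          rw [qf_pow_integral G hGmom a k, qf_pow_integral F hmom a k] at heq
          -- split both sums into D-part and rest
          rw [← Finset.sum_filter_add_sum_filter_not Finset.univ (· ∈ D)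
              (fun f : Fin k → Fin (m + 1) × Fin (m + 1) =>
                (∏ m', a (f m').1 (f m').2) * ∏ i, ∫ x : ℝ, x ^ qfCnt f i ∂G),
            ← Finset.sum_filter_add_sum_filter_not Finset.univ (· ∈ D)
              (fun f : Fin k → Fin (m + 1) × Fin (m + 1) =>
                (∏ m', a (f m').1 (f m').2) * ∏ i, ∫ x : ℝ, x ^ qfCnt f i ∂F)] at heq
          have hrest : (∑ f ∈ Finset.univ.filter (· ∉ D),
              (∏ m', a (f m').1 (f m').2) * ∏ i, ∫ x : ℝ, x ^ qfCnt f i ∂G)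
              = ∑ f ∈ Finset.univ.filter (· ∉ D),
              (∏ m', a (f m').1 (f m').2) * ∏ i, ∫ x : ℝ, x ^ qfCnt f i ∂F := by
            refine Finset.sum_congr rfl fun f hf => ?_
            have hfD : f ∉ D := (Finset.mem_filter.1 hf).2
            congr 1
            refine Finset.prod_congr rfl fun i _ => ?_
            refine ih (qfCnt f i) ?_
            rcases lt_or_eq_of_le (qfCnt_le f i) with hlt | heqq
            · exact hlt
            · exfalso
              apply hfD
              rw [hD]
              exact Finset.mem_image.2 ⟨i, Finset.mem_univ i, (qfCnt_eq_max heqq).symm⟩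
          have hdiagsum : ∀ (μ : Measure ℝ), IsProbabilityMeasure μ →
              (∑ f ∈ Finset.univ.filter (· ∈ D),
                (∏ m', a (f m').1 (f m').2) * ∏ i, ∫ x : ℝ, x ^ qfCnt f i ∂μ)
                = (∑ i, a i i ^ k) * ∫ x : ℝ, x ^ (k + k) ∂μ := by
            intro μ hμ
            have hfilter : Finset.univ.filter (· ∈ D) = D := by
              ext f; simp
            rw [hfilter, hD]
            rw [Finset.sum_image ?hinj]
            case hinj =>
              intro x _ y _ hxy
              have := congrFun hxy ⟨0, hkpos⟩
              exact (Prod.ext_iff.1 this).1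
            haveI := hμ
            have hterm : ∀ i : Fin (m + 1),
                (∏ _m' : Fin k, a i i) *
                  (∏ j, ∫ x : ℝ, x ^ qfCnt (fun _ : Fin k => (i, i)) j ∂μ)
                  = a i i ^ k * ∫ x : ℝ, x ^ (k + k) ∂μ := by
              intro i
              have hprodconst : (∏ _m' : Fin k, a i i) = a i i ^ k := by simp
              rw [hprodconst]
              congr 1
              rw [Finset.prod_eq_single i
                (fun j _ hj => by rw [qfCnt_const_ne hj]; simp)
                (fun h => absurd (Finset.mem_univ i) h)]
              rw [qfCnt_const_same]
            calc (∑ i : Fin (m + 1),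
                (∏ _m' : Fin k, a i i) *
                  ∏ j, ∫ x : ℝ, x ^ qfCnt (fun _ : Fin k => (i, i)) j ∂μ)
                = ∑ i : Fin (m + 1), a i i ^ k * ∫ x : ℝ, x ^ (k + k) ∂μ :=
                  Finset.sum_congr rfl fun i _ => hterm i
              _ = (∑ i, a i i ^ k) * ∫ x : ℝ, x ^ (k + k) ∂μ :=
                  (Finset.sum_mul _ _ _).symm
          rw [hrest, hdiagsum G inferInstance, hdiagsum F inferInstance] at heq
          have hfin : (∑ i, a i i ^ k) * (∫ x : ℝ, x ^ (k + k) ∂G)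
              = (∑ i, a i i ^ k) * ∫ x : ℝ, x ^ (k + k) ∂F := by linarith
          exact mul_left_cancel₀ hknz hfin
      · rw [odd_moment_zero G hGsymm hodd, odd_moment_zero F hFsymm hodd]
  exact hdet G inferInstance hGmom key
end

section
/- Let n ≥ 2 and let A = (a_{ij})_{i,j=1}^n be a nonzero symmetric real matrix with a_{ij} = 0 for all i ≠ j, with a_{ii} ≠ 0 for some i, and with a_{11} + a_{22} + ... + a_{nn} = 0; let Q(x_1,...,x_n) = Σ_{i,j=1}^n a_{ij} x_i x_j. Then for every symmetric probability distribution F on ℝ the pair (Q,F) does NOT have the characterization property: there exist i.i.d. symmetric random variables X_1,...,X_n with Q(Z_1,...,Z_n) =_d Q(X_1,...,X_n) (Z_1,...,Z_n i.i.d. with distribution F) but X_1 not equal in distribution to Z_1. In particular, if Z has distribution F, ζ is independent of Z with P(ζ = 1) = P(ζ = -1) = 1/2, and c > 0, then X = ζ(Z² + c)^{1/2} is symmetric and, for X_1,...,X_n i.i.d. copies of X, Q(X_1,...,X_n) =_d Q(Z_1,...,Z_n). -/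
open MeasureTheory Real Set
open scoped ENNReal

section Stmt16Aux

lemma stmt16_meas_f (c : ℝ) : Measurable fun z : ℝ => Real.sqrt (z ^ 2 + c) := by fun_prop

lemma stmt16_prob (F : Measure ℝ) [IsProbabilityMeasure F] (c : ℝ) :
    IsProbabilityMeasure
      ((2 : ℝ≥0∞)⁻¹ • (Measure.map (fun z : ℝ => Real.sqrt (z ^ 2 + c)) F +
        Measure.map (fun z : ℝ => -Real.sqrt (z ^ 2 + c)) F)) := by
  haveI : IsProbabilityMeasure (Measure.map (fun z : ℝ => Real.sqrt (z ^ 2 + c)) F) :=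
    Measure.isProbabilityMeasure_map (stmt16_meas_f c).aemeasurable
  haveI : IsProbabilityMeasure (Measure.map (fun z : ℝ => -Real.sqrt (z ^ 2 + c)) F) :=
    Measure.isProbabilityMeasure_map (stmt16_meas_f c).neg.aemeasurable
  constructor
  simp only [Measure.smul_apply, Measure.add_apply, measure_univ, smul_eq_mul]
  rw [mul_add, mul_one, ENNReal.inv_two_add_inv_two]

lemma stmt16_symm (F : Measure ℝ) [IsProbabilityMeasure F] (c : ℝ) :
    Measure.map (fun x : ℝ => -x)
      ((2 : ℝ≥0∞)⁻¹ • (Measure.map (fun z : ℝ => Real.sqrt (z ^ 2 + c)) F +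
        Measure.map (fun z : ℝ => -Real.sqrt (z ^ 2 + c)) F)) =
    (2 : ℝ≥0∞)⁻¹ • (Measure.map (fun z : ℝ => Real.sqrt (z ^ 2 + c)) F +
      Measure.map (fun z : ℝ => -Real.sqrt (z ^ 2 + c)) F) := by
  rw [Measure.map_smul, Measure.map_add _ _ measurable_neg,
    Measure.map_map measurable_neg (stmt16_meas_f c),
    Measure.map_map (f := fun z : ℝ => -Real.sqrt (z ^ 2 + c)) measurable_neg (stmt16_meas_f c).neg]
  simp [Function.comp_def, add_comm]

lemma stmt16_sq (F : Measure ℝ) [IsProbabilityMeasure F] (c : ℝ) (hc : 0 ≤ c) :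
    Measure.map (fun x : ℝ => x ^ 2)
      ((2 : ℝ≥0∞)⁻¹ • (Measure.map (fun z : ℝ => Real.sqrt (z ^ 2 + c)) F +
        Measure.map (fun z : ℝ => -Real.sqrt (z ^ 2 + c)) F)) =
    Measure.map (fun z : ℝ => z ^ 2 + c) F := by
  have hf : Measurable fun z : ℝ => Real.sqrt (z ^ 2 + c) := stmt16_meas_f c
  have hsq : Measurable fun x : ℝ => x ^ 2 := by fun_prop
  rw [Measure.map_smul, Measure.map_add _ _ hsq, Measure.map_map hsq hf,
    Measure.map_map (f := fun z : ℝ => -Real.sqrt (z ^ 2 + c)) hsq hf.neg]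
  have h1 : ((fun x : ℝ => x ^ 2) ∘ fun z : ℝ => Real.sqrt (z ^ 2 + c)) =
      fun z : ℝ => z ^ 2 + c := by
    funext z
    simp [Function.comp, Real.sq_sqrt (by positivity : (0:ℝ) ≤ z ^ 2 + c)]
  have h2 : ((fun x : ℝ => x ^ 2) ∘ fun z : ℝ => -Real.sqrt (z ^ 2 + c)) =
      fun z : ℝ => z ^ 2 + c := by
    funext z
    simp [Function.comp, Real.sq_sqrt (by positivity : (0:ℝ) ≤ z ^ 2 + c)]
  rw [h1, h2, ← two_smul ℝ≥0∞, smul_smul,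
    ENNReal.inv_mul_cancel two_ne_zero ENNReal.ofNat_ne_top, one_smul]

lemma stmt16_main (n : ℕ) (a : Fin n → Fin n → ℝ) (hoffdiag : ∀ i j, i ≠ j → a i j = 0)
    (htrace : (∑ i, a i i) = 0) (c : ℝ)
    (G F : Measure ℝ) [IsProbabilityMeasure G] [IsProbabilityMeasure F]
    (hGF : Measure.map (fun x : ℝ => x ^ 2) G = Measure.map (fun z : ℝ => z ^ 2 + c) F) :
    Measure.map (fun z : Fin n → ℝ => ∑ i, ∑ j, a i j * z i * z j) (Measure.pi fun _ => G) =
    Measure.map (fun z : Fin n → ℝ => ∑ i, ∑ j, a i j * z i * z j) (Measure.pi fun _ => F) := by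
  have hsq : Measurable fun x : ℝ => x ^ 2 := by fun_prop
  set L : (Fin n → ℝ) → ℝ := fun y => ∑ i, a i i * y i with hL
  have hLm : Measurable L := by fun_prop
  set S : (Fin n → ℝ) → (Fin n → ℝ) := fun z i => (z i) ^ 2 with hS
  have hSm : Measurable S := measurable_pi_lambda _ fun i => (measurable_pi_apply i).pow_const 2
  have hQ : (fun z : Fin n → ℝ => ∑ i, ∑ j, a i j * z i * z j) = L ∘ S := by
    funext z
    simp only [Function.comp, hL, hS]
    refine Finset.sum_congr rfl fun i _ => ?_
    rw [Finset.sum_eq_single i]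
    · ring
    · intro j _ hj; rw [hoffdiag i j (Ne.symm hj)]; ring
    · intro h; exact absurd (Finset.mem_univ i) h
  have hpiS : ∀ (μ : Measure ℝ) [IsProbabilityMeasure μ],
      Measure.map S (Measure.pi fun _ : Fin n => μ) =
      Measure.pi fun _ : Fin n => Measure.map (fun x : ℝ => x ^ 2) μ := by
    intro μ hμ
    haveI : IsProbabilityMeasure (Measure.map (fun x : ℝ => x ^ 2) μ) :=
      Measure.isProbabilityMeasure_map hsq.aemeasurable
    have hmp : ∀ _ : Fin n, MeasurePreserving (fun x : ℝ => x ^ 2) μ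
        (Measure.map (fun x : ℝ => x ^ 2) μ) := fun _ => ⟨hsq, rfl⟩
    exact (measurePreserving_pi _ _ hmp).map_eq
  haveI : IsProbabilityMeasure (Measure.map (fun x : ℝ => x ^ 2) F) :=
    Measure.isProbabilityMeasure_map hsq.aemeasurable
  have hshift : Measure.map (fun z : ℝ => z ^ 2 + c) F =
      Measure.map (fun y : ℝ => y + c) (Measure.map (fun x : ℝ => x ^ 2) F) := by
    rw [Measure.map_map (by fun_prop) hsq]; rfl
  haveI : IsProbabilityMeasure (Measure.map (fun y : ℝ => y + c)
      (Measure.map (fun x : ℝ => x ^ 2) F)) := Measure.isProbabilityMeasure_map (by fun_prop)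
  have hpiShift :
      (Measure.pi fun _ : Fin n => Measure.map (fun y : ℝ => y + c)
        (Measure.map (fun x : ℝ => x ^ 2) F)) =
      Measure.map (fun y : Fin n → ℝ => fun i => y i + c)
        (Measure.pi fun _ : Fin n => Measure.map (fun x : ℝ => x ^ 2) F) := by
    have hmp : ∀ _ : Fin n, MeasurePreserving (fun y : ℝ => y + c)
        (Measure.map (fun x : ℝ => x ^ 2) F)
        (Measure.map (fun y : ℝ => y + c) (Measure.map (fun x : ℝ => x ^ 2) F)) :=
      fun _ => ⟨by fun_prop, rfl⟩
    exact (measurePreserving_pi _ _ hmp).map_eq.symm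
  have hLshift : L ∘ (fun y : Fin n → ℝ => fun i => y i + c) = L := by
    funext y
    simp only [Function.comp, hL, mul_add, Finset.sum_add_distrib, ← Finset.sum_mul, htrace]
    ring
  have hshiftm : Measurable (fun y : Fin n → ℝ => fun i => y i + c) :=
    measurable_pi_lambda _ fun i => by fun_prop
  calc Measure.map (fun z : Fin n → ℝ => ∑ i, ∑ j, a i j * z i * z j) (Measure.pi fun _ => G)
      = Measure.map L (Measure.map S (Measure.pi fun _ => G)) := by
        rw [Measure.map_map hLm hSm, hQ]
    _ = Measure.map L (Measure.pi fun _ : Fin n => Measure.map (fun z : ℝ => z ^ 2 + c) F) := by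
        rw [hpiS G, hGF]
    _ = Measure.map L (Measure.map (fun y : Fin n → ℝ => fun i => y i + c)
          (Measure.pi fun _ : Fin n => Measure.map (fun x : ℝ => x ^ 2) F)) := by
        rw [hshift, hpiShift]
    _ = Measure.map L (Measure.pi fun _ : Fin n => Measure.map (fun x : ℝ => x ^ 2) F) := by
        rw [Measure.map_map hLm hshiftm, hLshift]
    _ = Measure.map (fun z : Fin n → ℝ => ∑ i, ∑ j, a i j * z i * z j)
          (Measure.pi fun _ => F) := by
        rw [← hpiS F, Measure.map_map hLm hSm, hQ]

lemma stmt16_ne (F : Measure ℝ) [IsProbabilityMeasure F]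
    (h : Measure.map (fun x : ℝ => x ^ 2) F = Measure.map (fun z : ℝ => z ^ 2 + 1) F) :
    False := by
  have hsq : Measurable fun x : ℝ => x ^ 2 := by fun_prop
  set μ : Measure ℝ := Measure.map (fun x : ℝ => x ^ 2) F with hμ
  haveI : IsProbabilityMeasure μ := Measure.isProbabilityMeasure_map hsq.aemeasurable
  have hshift : μ = Measure.map (fun y : ℝ => y + 1) μ := by
    rw [hμ, Measure.map_map (by fun_prop) hsq]; exact h
  have hstep : ∀ t : ℝ, μ (Iic t) = μ (Iic (t - 1)) := by
    intro t
    conv_lhs => rw [hshift]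
    rw [Measure.map_apply (by fun_prop) measurableSet_Iic]
    congr 1
    ext x
    simp [sub_eq_iff_eq_add]
  have hiter : ∀ (k : ℕ) (t : ℝ), μ (Iic t) = μ (Iic (t - k)) := by
    intro k
    induction k with
    | zero => simp
    | succ m ih =>
      intro t
      rw [ih t, hstep (t - m)]
      congr 2
      push_cast
      ring
  have hneg : μ (Iic (-1 : ℝ)) = 0 := by
    rw [hμ, Measure.map_apply hsq measurableSet_Iic]
    have he : (fun x : ℝ => x ^ 2) ⁻¹' Iic (-1 : ℝ) = ∅ := by
      ext x
      simp only [mem_preimage, mem_Iic, mem_empty_iff_false, iff_false, not_le]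
      nlinarith [sq_nonneg x]
    rw [he, measure_empty]
  have hzero : ∀ k : ℕ, μ (Iic (k : ℝ)) = 0 := by
    intro k
    rw [hiter (k + 1) (k : ℝ)]
    have : ((k : ℝ) - (k + 1 : ℕ)) = -1 := by push_cast; ring
    rw [this, hneg]
  have hcover : (univ : Set ℝ) ⊆ ⋃ k : ℕ, Iic (k : ℝ) := by
    intro x _
    obtain ⟨k, hk⟩ := exists_nat_ge x
    exact mem_iUnion.mpr ⟨k, hk⟩
  have : (1 : ℝ≥0∞) ≤ 0 := by
    calc (1 : ℝ≥0∞) = μ univ := (measure_univ).symm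
      _ ≤ μ (⋃ k : ℕ, Iic (k : ℝ)) := measure_mono hcover
      _ ≤ ∑' k : ℕ, μ (Iic (k : ℝ)) := measure_iUnion_le _
      _ = 0 := by simp [hzero]
  simp at this

end Stmt16Aux

/-- (Theorem 13.) Let `n ≥ 2` and let `A = (a_{ij})` be a nonzero symmetric
real diagonal matrix (`a_{ij} = 0` for `i ≠ j`, `a_{ii} ≠ 0` for some `i`) with zero trace,
and `Q(x) = Σ a_{ij} x_i x_j`. Then for every symmetric probability distribution `F` the pair
`(Q, F)` does not have the characterization property: there is a symmetric probability
distribution `G ≠ F` with `Q(X₁,…,X_n) =_d Q(Z₁,…,Z_n)` for `Xᵢ` i.i.d. `G`, `Zᵢ` i.i.d. `F`.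
In particular, for every `c > 0` the distribution `G_c` of `X = ζ(Z² + c)^{1/2}` — where
`Z ~ F` and `ζ = ±1` with probability `1/2` independently of `Z`, i.e.
`G_c = ½ map (√(·² + c)) F + ½ map (-√(·² + c)) F` — is symmetric and satisfies
`Q(X₁,…,X_n) =_d Q(Z₁,…,Z_n)`. -/
theorem stmt_16 (n : ℕ) (hn : 2 ≤ n) (a : Fin n → Fin n → ℝ)
    (hsymm : ∀ i j, a i j = a j i) (hA : a ≠ 0)
    (hoffdiag : ∀ i j, i ≠ j → a i j = 0)
    (hdiagne : ∃ i, a i i ≠ 0)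
    (htrace : (∑ i, a i i) = 0)
    (F : Measure ℝ) [IsProbabilityMeasure F]
    (hFsymm : Measure.map (fun x : ℝ => -x) F = F) :
    (∃ G : Measure ℝ, IsProbabilityMeasure G ∧
        Measure.map (fun x : ℝ => -x) G = G ∧
        Measure.map (fun z : Fin n → ℝ => ∑ i, ∑ j, a i j * z i * z j)
            (Measure.pi fun _ => G) =
          Measure.map (fun z : Fin n → ℝ => ∑ i, ∑ j, a i j * z i * z j)
            (Measure.pi fun _ => F) ∧
        G ≠ F) ∧
    ∀ c : ℝ, 0 < c →
      IsProbabilityMeasure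
          ((2 : ℝ≥0∞)⁻¹ • (Measure.map (fun z : ℝ => Real.sqrt (z ^ 2 + c)) F +
            Measure.map (fun z : ℝ => -Real.sqrt (z ^ 2 + c)) F)) ∧
      Measure.map (fun x : ℝ => -x)
          ((2 : ℝ≥0∞)⁻¹ • (Measure.map (fun z : ℝ => Real.sqrt (z ^ 2 + c)) F +
            Measure.map (fun z : ℝ => -Real.sqrt (z ^ 2 + c)) F)) =
        (2 : ℝ≥0∞)⁻¹ • (Measure.map (fun z : ℝ => Real.sqrt (z ^ 2 + c)) F +
          Measure.map (fun z : ℝ => -Real.sqrt (z ^ 2 + c)) F) ∧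
      Measure.map (fun z : Fin n → ℝ => ∑ i, ∑ j, a i j * z i * z j)
          (Measure.pi fun _ =>
            (2 : ℝ≥0∞)⁻¹ • (Measure.map (fun z : ℝ => Real.sqrt (z ^ 2 + c)) F +
              Measure.map (fun z : ℝ => -Real.sqrt (z ^ 2 + c)) F)) =
        Measure.map (fun z : Fin n → ℝ => ∑ i, ∑ j, a i j * z i * z j)
          (Measure.pi fun _ => F) := by
  have key : ∀ c : ℝ, 0 < c →
      IsProbabilityMeasure
          ((2 : ℝ≥0∞)⁻¹ • (Measure.map (fun z : ℝ => Real.sqrt (z ^ 2 + c)) F +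
            Measure.map (fun z : ℝ => -Real.sqrt (z ^ 2 + c)) F)) ∧
      Measure.map (fun x : ℝ => -x)
          ((2 : ℝ≥0∞)⁻¹ • (Measure.map (fun z : ℝ => Real.sqrt (z ^ 2 + c)) F +
            Measure.map (fun z : ℝ => -Real.sqrt (z ^ 2 + c)) F)) =
        (2 : ℝ≥0∞)⁻¹ • (Measure.map (fun z : ℝ => Real.sqrt (z ^ 2 + c)) F +
          Measure.map (fun z : ℝ => -Real.sqrt (z ^ 2 + c)) F) ∧
      Measure.map (fun z : Fin n → ℝ => ∑ i, ∑ j, a i j * z i * z j)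
          (Measure.pi fun _ =>
            (2 : ℝ≥0∞)⁻¹ • (Measure.map (fun z : ℝ => Real.sqrt (z ^ 2 + c)) F +
              Measure.map (fun z : ℝ => -Real.sqrt (z ^ 2 + c)) F)) =
        Measure.map (fun z : Fin n → ℝ => ∑ i, ∑ j, a i j * z i * z j)
          (Measure.pi fun _ => F) := by
    intro c hc
    refine ⟨stmt16_prob F c, stmt16_symm F c, ?_⟩
    haveI := stmt16_prob F c
    exact stmt16_main n a hoffdiag htrace c _ F (stmt16_sq F c hc.le)
  refine ⟨?_, key⟩
  obtain ⟨hprob, hGsymm, hdist⟩ := key 1 one_pos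
  refine ⟨(2 : ℝ≥0∞)⁻¹ • (Measure.map (fun z : ℝ => Real.sqrt (z ^ 2 + 1)) F +
      Measure.map (fun z : ℝ => -Real.sqrt (z ^ 2 + 1)) F), hprob, hGsymm, hdist, ?_⟩
  intro hGF
  have hsq1 := stmt16_sq F 1 zero_le_one
  rw [hGF] at hsq1
  exact stmt16_ne F hsq1
end
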